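/- arXiv:1511.08975 — 6 statements merged into one kernel-verified Lean document; each statement's English description precedes it below -/
import Mathlib

section
/- Let x̂ : ℤ → ℂ and r ≥ 1. Suppose there exists a nonzero filter h = (h[0],…,h[r]) ∈ ℂ^{r+1} such that ∑_{l=0}^{r} h[l]·x̂[k−l] = 0 for every k ∈ ℤ, and that no nonzero filter of length at most r annihilates x̂ in this sense (so r+1 is the minimum length of an annihilating filter of x̂). Let n and d satisfy min{n−d+1, d} > r. Then the Hankel matrix 𝓗(x̂) ∈ ℂ^{(n−d+1)×d} built from (x̂[0],…,x̂[n−1]) has rank exactly r. -/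
open Matrix

/-- Hankel matrix in `ℂ^{(n-d+1)×d}` built from the samples `x[0],…,x[n-1]` of a
two-sided sequence `x : ℤ → ℂ`. -/
noncomputable def hankelZ (n d : ℕ) (x : ℤ → ℂ) : Matrix (Fin (n - d + 1)) (Fin d) ℂ :=
  fun i j => x ((i.val + j.val : ℕ) : ℤ)

lemma ann_propagate (r : ℕ) (h : Fin (r + 1) → ℂ)
    (h0 : h 0 ≠ 0) (hlast : h (Fin.last r) ≠ 0)
    (y : ℤ → ℂ) (hrec : ∀ k : ℤ, ∑ l : Fin (r + 1), h l * y (k - ((l : ℕ) : ℤ)) = 0)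
    (hwin : ∀ k : ℤ, 0 ≤ k → k < (r : ℤ) → y k = 0) :
    ∀ k : ℤ, y k = 0 := by
  have hup : ∀ m : ℕ, y m = 0 := by
    intro m
    induction m using Nat.strong_induction_on with
    | _ m ih =>
      by_cases hm : m < r
      · exact hwin m (by positivity) (by exact_mod_cast hm)
      · push_neg at hm
        have := hrec m
        rw [Fin.sum_univ_succ] at this
        have hz : ∀ l : Fin r, y ((m : ℤ) - ((l.succ : ℕ) : ℤ)) = 0 := by
          intro l
          have harg : ((m : ℤ) - ((l.succ : ℕ) : ℤ)) = ((m - (l.val + 1) : ℕ) : ℤ) := by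
            have := l.isLt
            simp [Fin.val_succ]
            omega
          rw [harg]
          exact ih _ (by have := l.isLt; omega)
        rw [Finset.sum_eq_zero (fun l _ => by rw [hz l, mul_zero])] at this
        simp only [add_zero, Fin.val_zero, Nat.cast_zero, sub_zero] at this
        exact (mul_eq_zero.mp this).resolve_left h0
  have hdown : ∀ m : ℕ, y (-1 - m) = 0 := by
    intro m
    induction m using Nat.strong_induction_on with
    | _ m ih =>
      have := hrec (-1 - m + r)
      rw [Fin.sum_univ_castSucc] at this
      have hz : ∀ l : Fin r, y (-1 - (m : ℤ) + r - ((l.castSucc : ℕ) : ℤ)) = 0 := by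
        intro l
        have hl := l.isLt
        simp only [Fin.coe_castSucc]
        by_cases hc : (m : ℤ) + l.val < r
        · apply hwin <;> omega
        · have harg : (-1 - (m : ℤ) + r - l.val) = -1 - ((m + l.val - r : ℕ) : ℤ) := by
            omega
          rw [harg]
          exact ih _ (by omega)
      rw [Finset.sum_eq_zero (fun l _ => by rw [hz l, mul_zero])] at this
      simp only [zero_add, Fin.val_last] at this
      have harg : (-1 - (m : ℤ) + r - r) = -1 - (m : ℤ) := by ring
      rw [harg] at this
      exact (mul_eq_zero.mp this).resolve_left hlast
  intro k
  rcases le_or_gt 0 k with hk | hk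
  · have : k = ((k.toNat : ℕ) : ℤ) := by omega
    rw [this]; exact hup _
  · have : k = -1 - ((-1 - k).toNat : ℕ) := by omega
    rw [this]; exact hdown _

/-- If `r+1` is the minimum length of a (two-sided) annihilating filter
of `x̂ : ℤ → ℂ` and `min{n-d+1, d} > r`, then the Hankel matrix built from
`x̂[0],…,x̂[n-1]` has rank exactly `r`. -/
theorem hankel_rank_eq_of_min_annihilating_filter
    (xh : ℤ → ℂ) (r n d : ℕ) (hr : 1 ≤ r)
    (h : Fin (r + 1) → ℂ) (hh0 : h ≠ 0)
    (hann : ∀ k : ℤ, ∑ l : Fin (r + 1), h l * xh (k - ((l : ℕ) : ℤ)) = 0)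
    (hmin : ∀ s : ℕ, s ≤ r → ∀ h' : Fin s → ℂ,
      (∀ k : ℤ, ∑ l : Fin s, h' l * xh (k - ((l : ℕ) : ℤ)) = 0) → h' = 0)
    (hd : d ≤ n) (h1 : r < n - d + 1) (h2 : r < d) :
    (hankelZ n d xh).rank = r := by
  classical
  set A := hankelZ n d xh with hA
  -- endpoint coefficients are nonzero
  have hlast : h (Fin.last r) ≠ 0 := by
    intro hz
    apply hh0
    have h' : (fun l : Fin r => h l.castSucc) = 0 := by
      apply hmin r le_rfl
      intro k
      have := hann k
      rw [Fin.sum_univ_castSucc, hz, zero_mul, add_zero] at this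
      simpa [Fin.coe_castSucc] using this
    funext l
    rcases Fin.eq_castSucc_or_eq_last l with ⟨m, rfl⟩ | rfl
    · exact congrFun h' m
    · exact hz
  have h0 : h 0 ≠ 0 := by
    intro hz
    apply hh0
    have h' : (fun l : Fin r => h l.succ) = 0 := by
      apply hmin r le_rfl
      intro k
      have := hann (k + 1)
      rw [Fin.sum_univ_succ, hz, zero_mul, zero_add] at this
      rw [← this]
      apply Finset.sum_congr rfl
      intro l _
      congr 1
      simp only [Fin.val_succ]
      push_cast
      ring
    funext l
    cases l using Fin.cases with
    | zero => exact hz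
    | succ m => exact congrFun h' m
  -- the first r columns
  set e : Fin r → (Fin (n - d + 1) → ℂ) := fun l => Aᵀ (Fin.castLE h2.le l) with he
  set V : Submodule ℂ (Fin (n - d + 1) → ℂ) := Submodule.span ℂ (Set.range e) with hV
  -- every column lies in V
  have hcol : ∀ m : ℕ, ∀ hm : m < d, Aᵀ ⟨m, hm⟩ ∈ V := by
    intro m
    induction m using Nat.strong_induction_on with
    | _ m ih =>
      intro hm
      by_cases hmr : m < r
      · exact Submodule.subset_span ⟨⟨m, hmr⟩, rfl⟩
      · push_neg at hmr
        have hcomb : Aᵀ ⟨m, hm⟩ =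
            ∑ l : Fin r, (-(h 0)⁻¹ * h l.succ) •
              Aᵀ (⟨m - (l.val + 1), by omega⟩ : Fin d) := by
          funext i
          rw [Finset.sum_apply]
          have := hann ((i.val + m : ℕ) : ℤ)
          rw [Fin.sum_univ_succ] at this
          simp only [Fin.val_zero, Nat.cast_zero, sub_zero] at this
          have hx : xh ((i.val + m : ℕ) : ℤ) =
              ∑ l : Fin r, (-(h 0)⁻¹ * h l.succ) * xh ((i.val + m : ℕ) - ((l.succ : ℕ) : ℤ)) := by
            have hS : (-(h 0)⁻¹) * (∑ l : Fin r, h l.succ * xh ((i.val + m : ℕ) - ((l.succ : ℕ) : ℤ)))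
                = xh ((i.val + m : ℕ) : ℤ) := by
              have hsolve : (∑ l : Fin r, h l.succ * xh ((i.val + m : ℕ) - ((l.succ : ℕ) : ℤ)))
                  = -(h 0 * xh ((i.val + m : ℕ) : ℤ)) := by
                linear_combination this
              rw [hsolve, neg_mul_neg, inv_mul_cancel_left₀ h0]
            rw [← hS, Finset.mul_sum]
            exact Finset.sum_congr rfl fun l _ => (mul_assoc _ _ _).symm
          simp only [transpose_apply, hA, hankelZ]
          rw [hx]
          apply Finset.sum_congr rfl
          intro l _
          have hl := l.isLt
          simp only [Pi.smul_apply, smul_eq_mul, transpose_apply]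
          congr 2
          simp only [Fin.val_succ]
          push_cast
          omega
        rw [hcomb]
        apply Submodule.sum_mem
        intro l _
        have hl := l.isLt
        exact Submodule.smul_mem _ _ (ih (m - (l.val + 1)) (by omega) _)
  -- the first r columns are linearly independent
  have hli : LinearIndependent ℂ e := by
    rw [Fintype.linearIndependent_iff]
    intro c hc
    -- define y and show it vanishes everywhere
    set y : ℤ → ℂ := fun t => ∑ j : Fin r, c j * xh (t + j) with hy
    have hyrec : ∀ k : ℤ, ∑ l : Fin (r + 1), h l * y (k - ((l : ℕ) : ℤ)) = 0 := by
      intro k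
      have : ∑ l : Fin (r + 1), h l * y (k - ((l : ℕ) : ℤ)) =
          ∑ j : Fin r, c j * ∑ l : Fin (r + 1), h l * xh ((k + j) - ((l : ℕ) : ℤ)) := by
        simp only [hy, Finset.mul_sum]
        rw [Finset.sum_comm]
        apply Finset.sum_congr rfl
        intro j _
        apply Finset.sum_congr rfl
        intro l _
        have harg : (k - ((l : ℕ) : ℤ) + j) = (k + j - ((l : ℕ) : ℤ)) := by ring
        rw [harg]
        ring
      rw [this]
      exact Finset.sum_eq_zero fun j _ => by rw [hann (k + j), mul_zero]
    have hywin : ∀ k : ℤ, 0 ≤ k → k < (r : ℤ) → y k = 0 := by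
      intro k hk1 hk2
      have hklt : k.toNat < n - d + 1 := by omega
      have := congrFun hc ⟨k.toNat, hklt⟩
      simp only [Finset.sum_apply, Pi.smul_apply, smul_eq_mul, Pi.zero_apply, he,
        transpose_apply, hA, hankelZ] at this
      rw [hy]
      rw [← this]
      apply Finset.sum_congr rfl
      intro j _
      congr 2
      simp [Fin.castLE]
      push_cast
      omega
    have hyzero := ann_propagate r h h0 hlast y hyrec hywin
    -- reverse filter annihilates xh
    have hrev : (fun l : Fin r => c l.rev) = 0 := by
      apply hmin r le_rfl
      intro k
      have : ∑ l : Fin r, c l.rev * xh (k - ((l : ℕ) : ℤ)) = y (k - (r - 1)) := by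
        rw [hy]
        apply Fintype.sum_equiv (Fin.revPerm)
        intro l
        simp only [Fin.revPerm_apply]
        congr 2
        have hl := l.isLt
        have : ((l.rev : ℕ) : ℤ) = (r : ℤ) - 1 - l.val := by
          rw [Fin.val_rev]; push_cast; omega
        rw [this]
        ring
      rw [this, hyzero]
    intro j
    have := congrFun hrev j.rev
    simpa [Fin.rev_rev] using this
  -- conclude
  have hspan : Submodule.span ℂ (Set.range Aᵀ) = V := by
    apply le_antisymm
    · rw [Submodule.span_le]
      rintro _ ⟨j, rfl⟩
      exact hcol j.val j.isLt
    · apply Submodule.span_le.mpr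
      rintro _ ⟨l, rfl⟩
      exact Submodule.subset_span ⟨Fin.castLE h2.le l, rfl⟩
  rw [Matrix.rank_eq_finrank_span_cols, show A.col = Aᵀ from rfl, hspan, hV, finrank_span_eq_card hli,
    Fintype.card_fin]
end

section
/- Let x̂ ∈ ℂⁿ (indexed by {0,…,n−1}) and suppose there exists a nonzero filter h = (h[0],…,h[r]) ∈ ℂ^{r+1} such that ∑_{l=0}^{r} h[l]·x̂[k−l] = 0 for every integer k with r ≤ k ≤ n−1. If d satisfies r < d ≤ n, then the Hankel matrix 𝓗(x̂) ∈ ℂ^{(n−d+1)×d} has rank at most r. -/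
open Matrix

/-- Hankel matrix `𝓗(x) ∈ ℂ^{(n-d+1)×d}` with entries `𝓗(x)_{i,j} = x[i+j]`. -/
noncomputable def hankel (n d : ℕ) (x : Fin n → ℂ) : Matrix (Fin (n - d + 1)) (Fin d) ℂ :=
  fun i j => if h : i.val + j.val < n then x ⟨i.val + j.val, h⟩ else 0

set_option maxHeartbeats 1000000 in
/-- If some nonzero filter of length `r+1` annihilates the samples
`x̂[0],…,x̂[n−1]` (for `r ≤ k ≤ n−1`) and `r < d ≤ n`, then the Hankel matrix `𝓗(x̂)`
has rank at most `r`. -/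
theorem hankel_rank_le_of_annihilating_filter
    (n d r : ℕ) (xh : Fin n → ℂ) (h : Fin (r + 1) → ℂ) (hh0 : h ≠ 0)
    (hann : ∀ k : ℕ, r ≤ k → ∀ hk : k < n,
      ∑ l : Fin (r + 1), h l * xh ⟨k - (l : ℕ), by omega⟩ = 0)
    (hrd : r < d) (hdn : d ≤ n) :
    (hankel n d xh).rank ≤ r := by
  classical
  set A := hankel n d xh with hA
  -- `M` = largest index with nonzero filter coefficient
  have hne : (Finset.univ.filter (fun l : Fin (r+1) => h l ≠ 0)).Nonempty := by
    by_contra hc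
    apply hh0
    funext l
    simp only [Pi.zero_apply]
    by_contra hl
    exact hc ⟨l, by simp [hl]⟩
  obtain ⟨M, hMne, hMmax⟩ : ∃ M : Fin (r+1), h M ≠ 0 ∧
      ∀ l : Fin (r+1), h l ≠ 0 → l.val ≤ M.val := by
    refine ⟨(Finset.univ.filter (fun l : Fin (r+1) => h l ≠ 0)).max' hne, ?_, ?_⟩
    · have := (Finset.univ.filter (fun l : Fin (r+1) => h l ≠ 0)).max'_mem hne
      simpa using this
    · intro l hl
      exact Finset.le_max' _ l (by simp [hl])
  have hMr : (M : ℕ) ≤ r := by omega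
  -- the spanning set of column indices
  set S : Finset (Fin d) :=
    Finset.univ.filter (fun j : Fin d => j.val < r - M.val ∨ d - M.val ≤ j.val) with hS
  -- entries of the Hankel matrix
  have hent : ∀ (i : Fin (n - d + 1)) (j : Fin d) (hij : i.val + j.val < n),
      A i j = xh ⟨i.val + j.val, hij⟩ := by
    intro i j hij
    simp [hA, hankel, hij]
  clear hA
  clear_value A
  -- every column lies in the span of the columns indexed by `S`
  have key : ∀ t : ℕ, ∀ j : Fin d, d - j.val ≤ t →
      Aᵀ j ∈ Submodule.span ℂ (Aᵀ '' (S : Set (Fin d))) := by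
    intro t
    induction t with
    | zero => intro j hj; omega
    | succ t ih =>
      intro j hj
      by_cases hjS : j ∈ S
      · exact Submodule.subset_span ⟨j, by simpa using hjS, rfl⟩
      · have hjS' : r - M.val ≤ j.val ∧ j.val < d - M.val := by
          rw [hS, Finset.mem_filter] at hjS
          push_neg at hjS
          have := hjS (Finset.mem_univ j)
          omega
        have hjd : j.val < d := j.isLt
        -- use the annihilating relation at k = i + j + M
        have hcol : Aᵀ j = (-(h M)⁻¹) •
            ∑ l ∈ Finset.univ.filter (fun l : Fin (r+1) => l.val < M.val),
            h l • Aᵀ ⟨j.val + (M.val - l.val), by omega⟩ := by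
          funext i
          have hi : i.val ≤ n - d := by omega
          have hk : (r : ℕ) ≤ i.val + j.val + M.val := by omega
          have hkn : i.val + j.val + M.val < n := by omega
          have hrel := hann (i.val + j.val + M.val) hk hkn
          -- split off the `l = M` term
          rw [← Finset.add_sum_erase _ _ (Finset.mem_univ M)] at hrel
          have hrest : ∑ l ∈ Finset.univ.erase M,
              h l * xh ⟨i.val + j.val + M.val - l.val, by omega⟩ =
              ∑ l ∈ Finset.univ.filter (fun l : Fin (r+1) => l.val < M.val),
              h l * xh ⟨i.val + j.val + M.val - l.val, by omega⟩ := by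
            refine (Finset.sum_subset ?_ ?_).symm
            · intro l hl
              simp only [Finset.mem_filter, Finset.mem_univ, true_and] at hl
              refine Finset.mem_erase.mpr ⟨?_, Finset.mem_univ l⟩
              intro hlm
              rw [hlm] at hl
              omega
            · intro l hl1 hl2
              simp only [Finset.mem_erase, Finset.mem_univ, and_true] at hl1
              simp only [Finset.mem_filter, Finset.mem_univ, true_and, not_lt] at hl2
              have hl0 : h l = 0 := by
                by_contra hc
                have hle := hMmax l hc
                exact hl1 (Fin.ext (by omega))
              simp [hl0]
          rw [hrest] at hrel
          have hsimp : (xh ⟨i.val + j.val + M.val - M.val, by omega⟩ : ℂ) =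
              xh ⟨i.val + j.val, by omega⟩ := by
            congr 1
            apply Fin.ext
            show i.val + j.val + M.val - M.val = i.val + j.val
            omega
          rw [hsimp] at hrel
          have hAij : Aᵀ j i = xh ⟨i.val + j.val, by omega⟩ := by
            rw [transpose_apply]; exact hent i j (by omega)
          -- scalar identity
          have hxi : (xh ⟨i.val + j.val, by omega⟩ : ℂ) = -(h M)⁻¹ *
              ∑ l ∈ Finset.univ.filter (fun l : Fin (r+1) => l.val < M.val),
              h l * xh ⟨i.val + j.val + M.val - l.val, by omega⟩ := by
            field_simp
            linear_combination hrel
          rw [hAij, hxi]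
          simp only [Pi.smul_apply, Finset.sum_apply, smul_eq_mul]
          congr 1
          refine Finset.sum_congr rfl ?_
          intro l hl
          simp only [Finset.mem_filter, Finset.mem_univ, true_and] at hl
          rw [transpose_apply,
            hent i ⟨j.val + (M.val - l.val), by omega⟩ (by simp only; omega)]
          congr 1
          apply congrArg
          apply Fin.ext
          simp only
          omega
        rw [hcol]
        refine Submodule.smul_mem _ _ (Submodule.sum_mem _ ?_)
        intro l hl
        simp only [Finset.mem_filter, Finset.mem_univ, true_and] at hl
        refine Submodule.smul_mem _ _ (ih _ ?_)
        simp only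
        omega
  -- card of S is at most r
  have hScard : S.card ≤ r := by
    have hmem : ∀ j : Fin d, j ∈ S → j.val < r - M.val ∨ d - M.val ≤ j.val := by
      intro j hj
      rw [hS, Finset.mem_filter] at hj
      exact hj.2
    have := Finset.card_le_card_of_injOn
      (f := fun j : Fin d => if j.val < r - M.val then j.val else j.val - (d - r))
      (t := Finset.range r)
      (fun j hj => by
        have := hmem j hj
        simp only [Finset.mem_coe, Finset.mem_range]
        split_ifs with h1 <;> omega)
      (by
        intro j1 hj1 j2 hj2 heq
        have m1 := hmem j1 (by simpa using hj1)
        have m2 := hmem j2 (by simpa using hj2)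
        simp only at heq
        apply Fin.ext
        have d1 := j1.isLt
        have d2 := j2.isLt
        split_ifs at heq with h1 h2 h2 <;> omega)
    simpa using this
  -- conclude
  rw [Matrix.rank_eq_finrank_span_cols]
  have hle : Submodule.span ℂ (Set.range Aᵀ) ≤ Submodule.span ℂ (Aᵀ '' (S : Set (Fin d))) := by
    rw [Submodule.span_le]
    rintro _ ⟨j, rfl⟩
    exact key d j (by omega)
  have e3 := finrank_span_finset_le_card (R := ℂ) (S.image Aᵀ)
  rw [Set.finrank] at e3
  erw [Finset.coe_image] at e3
  exact le_trans (Submodule.finrank_mono hle)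
    (e3.trans (le_trans Finset.card_image_le hScard))
end

section
/- Let p ≥ 1, let λ_0,…,λ_{p−1} ∈ ℂ be distinct and nonzero, let l_0,…,l_{p−1} ≥ 1, let a_{j,l} ∈ ℂ for 0 ≤ l ≤ l_j−1 with leading coefficients a_{j,l_j−1} ≠ 0 for every j, and set r = ∑_{j=0}^{p−1} l_j. Define x̂ ∈ ℂⁿ by x̂[k] = ∑_{j=0}^{p−1} ∑_{l=0}^{l_j−1} a_{j,l}·k^l·λ_j^k for k = 0,…,n−1 (with the convention k⁰ = 1). If min{n−d+1, d} > r, then the Hankel matrix 𝓗(x̂) ∈ ℂ^{(n−d+1)×d} has rank exactly r. -/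
open Matrix

section AuxiliaryLemmas
open Polynomial Finset

noncomputable def Dop (P : ℂ[X]) : ℂ[X] := X * derivative P

lemma Dop_coeff (s : ℕ) (P : ℂ[X]) (k : ℕ) :
    (Dop^[s] P).coeff k = (k : ℂ) ^ s * P.coeff k := by
  induction s generalizing P k with
  | zero => simp
  | succ s ih =>
    rw [Function.iterate_succ_apply]
    rw [ih]
    cases k with
    | zero => simp [Dop, Polynomial.mul_coeff_zero]
    | succ k =>
      rw [Dop, Polynomial.coeff_X_mul, Polynomial.coeff_derivative]
      push_cast
      ring

lemma Dop_natDegree_le (s : ℕ) (P : ℂ[X]) : (Dop^[s] P).natDegree ≤ P.natDegree := by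
  induction s generalizing P with
  | zero => simp
  | succ s ih =>
    rw [Function.iterate_succ_apply']
    refine le_trans ?_ (ih P)
    set Q := Dop^[s] P
    rcases Nat.eq_zero_or_pos Q.natDegree with h | h
    · obtain ⟨c, hc⟩ := Polynomial.natDegree_eq_zero.mp h
      rw [← hc]; simp [Dop]
    · calc (Dop Q).natDegree ≤ X.natDegree + (derivative Q).natDegree :=
            Polynomial.natDegree_mul_le
      _ ≤ 1 + (Q.natDegree - 1) := by
            have := Polynomial.natDegree_derivative_le Q
            simp [Polynomial.natDegree_X]
      _ ≤ Q.natDegree := by omega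

lemma Dop_dvd (l0 : ℂ) (s u : ℕ) (P : ℂ[X]) (h : (X - C l0) ^ (u + s) ∣ P) :
    (X - C l0) ^ u ∣ Dop^[s] P := by
  induction s generalizing u P with
  | zero => simpa using h
  | succ s ih =>
    rw [Function.iterate_succ_apply']
    have h1 : (X - C l0) ^ (u + 1) ∣ Dop^[s] P := by
      apply ih
      convert h using 2
      omega
    have h2 : (X - C l0) ^ u ∣ derivative (Dop^[s] P) := by
      have := Polynomial.pow_sub_one_dvd_derivative_of_pow_dvd h1
      simpa using this
    exact h2.mul_left _

lemma poly_vanish_nat (P : ℂ[X]) (h : ∀ i : ℕ, P.eval (i : ℂ) = 0) : P = 0 := by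
  refine Polynomial.eq_zero_of_infinite_isRoot P ?_
  apply Set.infinite_of_injective_forall_mem (f := (Nat.cast : ℕ → ℂ))
  · exact Nat.cast_injective
  · intro i; exact h i

lemma rec_step (q : ℂ[X]) (l0 : ℂ) (L : ℕ) (hdvd : (X - C l0) ^ L ∣ q)
    (P : ℂ[X]) (hP : P.natDegree < L) (i : ℕ) :
    ∑ k ∈ range (q.natDegree + 1), q.coeff k * (P.eval ((i + k : ℕ) : ℂ) * l0 ^ (i + k)) = 0 := by
  have hev : ∀ u, u < L →
      ∑ k ∈ range (q.natDegree + 1), q.coeff k * (k : ℂ) ^ u * l0 ^ k = 0 := by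
    intro u hu
    have h1 : (X - C l0) ^ (1 + u) ∣ q := dvd_trans (pow_dvd_pow _ (by omega)) hdvd
    obtain ⟨v, hv⟩ := Dop_dvd l0 u 1 q h1
    have h2 : (Dop^[u] q).eval l0 = 0 := by rw [hv]; simp
    rw [← h2, Polynomial.eval_eq_sum_range'
      (lt_of_le_of_lt (Dop_natDegree_le u q) (Nat.lt_succ_self _))]
    exact Finset.sum_congr rfl fun k _ => by rw [Dop_coeff]; ring
  have key : ∀ k ∈ range (q.natDegree + 1),
      q.coeff k * (P.eval ((i + k : ℕ) : ℂ) * l0 ^ (i + k)) =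
      ∑ s ∈ range L, ∑ t ∈ range (s + 1),
        (P.coeff s * (i : ℂ) ^ t * (s.choose t) * l0 ^ i) *
          (q.coeff k * (k : ℂ) ^ (s - t) * l0 ^ k) := by
    intro k _
    rw [Polynomial.eval_eq_sum_range' hP]
    push_cast
    rw [pow_add, Finset.sum_mul, Finset.mul_sum]
    refine Finset.sum_congr rfl fun s _ => ?_
    rw [add_pow]
    simp only [Finset.mul_sum, Finset.sum_mul]
    refine Finset.sum_congr rfl fun t _ => ?_
    ring
  rw [Finset.sum_congr rfl key, Finset.sum_comm]
  refine Finset.sum_eq_zero fun s hs => ?_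
  rw [Finset.sum_comm]
  refine Finset.sum_eq_zero fun t _ => ?_
  rw [← Finset.mul_sum, hev (s - t) (by have := Finset.mem_range.mp hs; omega), mul_zero]

lemma indep_aux : ∀ (N : ℕ) (s : Finset ℂ) (f : ℂ → ℂ[X]),
    ((∑ μ ∈ s, (f μ).natDegree) + s.card ≤ N) → (∀ μ ∈ s, μ ≠ 0) →
    (∀ i : ℕ, ∑ μ ∈ s, (f μ).eval (i : ℂ) * μ ^ i = 0) → ∀ μ ∈ s, f μ = 0 := by
  intro N
  induction N with
  | zero =>
    intro s f hN _ _ μ hμ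
    have := Finset.card_pos.mpr ⟨μ, hμ⟩
    omega
  | succ N ih =>
    intro s f hN h0 hvan μ0 hμ0
    by_cases hz : f μ0 = 0
    · exact hz
    · -- pivot at μ0
      set g : ℂ → ℂ[X] := fun μ => C μ * (f μ).comp (X + C 1) - C μ0 * f μ with hg
      have heval : ∀ (μ : ℂ) (i : ℕ),
          (g μ).eval (i : ℂ) = μ * (f μ).eval ((i + 1 : ℕ) : ℂ) - μ0 * (f μ).eval (i : ℂ) := by
        intro μ i
        simp only [hg, Polynomial.eval_sub, Polynomial.eval_mul, Polynomial.eval_C,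
          Polynomial.eval_comp, Polynomial.eval_add, Polynomial.eval_X, Polynomial.eval_one]
        push_cast
        ring
      have hgvan : ∀ i : ℕ, ∑ μ ∈ s, (g μ).eval (i : ℂ) * μ ^ i = 0 := by
        intro i
        have e1 : ∑ μ ∈ s, (g μ).eval (i : ℂ) * μ ^ i =
            (∑ μ ∈ s, (f μ).eval ((i + 1 : ℕ) : ℂ) * μ ^ (i + 1)) -
              μ0 * ∑ μ ∈ s, (f μ).eval (i : ℂ) * μ ^ i := by
          rw [Finset.mul_sum, ← Finset.sum_sub_distrib]
          refine Finset.sum_congr rfl fun μ _ => ?_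
          rw [heval]
          ring
        rw [e1, hvan, hvan, mul_zero, sub_zero]
      have hdeg : ∀ μ, (g μ).natDegree ≤ (f μ).natDegree := by
        intro μ
        refine le_trans (Polynomial.natDegree_sub_le _ _) (max_le ?_ ?_)
        · refine le_trans (Polynomial.natDegree_C_mul_le _ _) ?_
          rw [Polynomial.natDegree_comp, Polynomial.natDegree_X_add_C, mul_one]
        · exact Polynomial.natDegree_C_mul_le _ _
      have hlcomp : ∀ μ, ((f μ).comp (X + C 1)).leadingCoeff = (f μ).leadingCoeff := by
        intro μ
        rw [Polynomial.leadingCoeff_comp (by rw [Polynomial.natDegree_X_add_C]; omega),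
          (Polynomial.monic_X_add_C (1 : ℂ)).leadingCoeff, one_pow, mul_one]
      have hndcomp : ∀ μ, ((f μ).comp (X + C 1)).natDegree = (f μ).natDegree := by
        intro μ
        rw [Polynomial.natDegree_comp, Polynomial.natDegree_X_add_C, mul_one]
      -- from vanishing of g away from μ0, deduce f vanishes away from μ0
      have key : (∀ μ ∈ s, μ ≠ μ0 → g μ = 0) → f μ0 = 0 := by
        intro hg0
        have hfz : ∀ μ ∈ s, μ ≠ μ0 → f μ = 0 := by
          intro μ hμ hne
          by_contra hfμ
          have he : C μ * (f μ).comp (X + C 1) = C μ0 * f μ :=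
            sub_eq_zero.mp (hg0 μ hμ hne)
          have hlc : μ * (f μ).leadingCoeff = μ0 * (f μ).leadingCoeff := by
            have := congrArg Polynomial.leadingCoeff he
            rwa [Polynomial.leadingCoeff_mul, Polynomial.leadingCoeff_mul,
              Polynomial.leadingCoeff_C, Polynomial.leadingCoeff_C, hlcomp] at this
          have : (f μ).leadingCoeff = 0 := by
            have h2 : (μ - μ0) * (f μ).leadingCoeff = 0 := by linear_combination hlc
            rcases mul_eq_zero.mp h2 with h | h
            · exact absurd (sub_eq_zero.mp h) hne
            · exact h
          exact hfμ (Polynomial.leadingCoeff_eq_zero.mp this)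
        have hred : ∀ i : ℕ, (f μ0).eval (i : ℂ) * μ0 ^ i = 0 := by
          intro i
          have hs := Finset.sum_eq_single_of_mem (f := fun μ => (f μ).eval (i : ℂ) * μ ^ i)
            μ0 hμ0 (fun μ hμ hne => by show (f μ).eval (i : ℂ) * μ ^ i = 0; rw [hfz μ hμ hne, Polynomial.eval_zero, zero_mul])
          rw [← hvan i, hs]
        refine poly_vanish_nat _ fun i => ?_
        have := hred i
        have hp : (μ0 : ℂ) ^ i ≠ 0 := pow_ne_zero _ (h0 μ0 hμ0)
        exact (mul_eq_zero.mp this).resolve_right hp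
      by_cases hc : (f μ0).natDegree = 0
      · -- constant pivot: recurse on s.erase μ0
        have hgμ0 : g μ0 = 0 := by
          obtain ⟨c, hcc⟩ := Polynomial.natDegree_eq_zero.mp hc
          simp [hg, ← hcc, Polynomial.C_comp]
        refine key fun μ hμ hne => ?_
        refine ih (s.erase μ0) g ?_ (fun ν hν => h0 ν (Finset.erase_subset _ _ hν))
          (fun i => by rw [Finset.sum_erase _ (by rw [hgμ0]; simp), hgvan]) μ
          (Finset.mem_erase.mpr ⟨hne, hμ⟩)
        have b1 : ∑ ν ∈ s.erase μ0, (g ν).natDegree ≤ ∑ ν ∈ s.erase μ0, (f ν).natDegree :=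
          Finset.sum_le_sum fun ν _ => hdeg ν
        have b2 : ∑ ν ∈ s.erase μ0, (f ν).natDegree ≤ ∑ ν ∈ s, (f ν).natDegree :=
          Finset.sum_le_sum_of_subset (Finset.erase_subset _ _)
        have b3 : (s.erase μ0).card = s.card - 1 := Finset.card_erase_of_mem hμ0
        have b4 : 1 ≤ s.card := Finset.card_pos.mpr ⟨μ0, hμ0⟩
        omega
      · -- non-constant pivot: degree drops strictly, recurse on s
        have hstrict : (g μ0).natDegree < (f μ0).natDegree := by
          set cp := (f μ0).comp (X + C 1) with hcp
          have hcpne : cp ≠ 0 := fun h => by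
            have := hlcomp μ0
            rw [← hcp, h, Polynomial.leadingCoeff_zero] at this
            exact hz (Polynomial.leadingCoeff_eq_zero.mp this.symm)
          have hdlt : (cp - f μ0).degree < cp.degree :=
            Polynomial.degree_sub_lt
              (by rw [Polynomial.degree_eq_natDegree hcpne, Polynomial.degree_eq_natDegree hz,
                hndcomp]) hcpne (hlcomp μ0)
          have hdlt' : (cp - f μ0).degree < (f μ0).degree := by
            rwa [Polynomial.degree_eq_natDegree hcpne, hndcomp μ0,
              ← Polynomial.degree_eq_natDegree hz] at hdlt
          have hnd : (cp - f μ0).natDegree < (f μ0).natDegree := by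
            by_cases hsub : cp - f μ0 = 0
            · rw [hsub, Polynomial.natDegree_zero]; omega
            · exact Polynomial.natDegree_lt_natDegree hsub hdlt'
          have hgeq : g μ0 = C μ0 * (cp - f μ0) := by
            rw [hg]; dsimp only; rw [mul_sub, hcp]
          calc (g μ0).natDegree ≤ (cp - f μ0).natDegree := by
                rw [hgeq]; exact Polynomial.natDegree_C_mul_le _ _
          _ < _ := hnd
        refine key fun μ hμ hne => ?_
        refine ih s g ?_ h0 hgvan μ hμ
        have b1 : ∑ ν ∈ s, (g ν).natDegree < ∑ ν ∈ s, (f ν).natDegree :=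
          Finset.sum_lt_sum (fun ν _ => hdeg ν) ⟨μ0, hμ0, hstrict⟩
        omega

lemma lemmaA (p : ℕ) (lam : Fin p → ℂ) (hinj : Function.Injective lam)
    (h0 : ∀ j, lam j ≠ 0) (l : Fin p → ℕ) (f : Fin p → ℂ[X])
    (hdeg : ∀ j, (f j).natDegree < l j) (K : ℕ) (hK : ∑ j, l j ≤ K)
    (hvan : ∀ i : ℕ, i < K → ∑ j, (f j).eval (i : ℂ) * lam j ^ i = 0) :
    ∀ j, f j = 0 := by
  set r := ∑ j, l j with hr
  set q : ℂ[X] := ∏ j, (X - C (lam j)) ^ (l j) with hq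
  have hmonic : q.Monic :=
    monic_prod_of_monic _ _ fun j _ => (monic_X_sub_C _).pow _
  have hqdeg : q.natDegree = r := by
    rw [hq, Polynomial.natDegree_prod _ _ fun j _ => pow_ne_zero _ (X_sub_C_ne_zero _)]
    simp [Polynomial.natDegree_pow, Polynomial.natDegree_X_sub_C, hr]
  have hcoefr : q.coeff r = 1 := by rw [← hqdeg]; exact hmonic.coeff_natDegree
  set h : ℕ → ℂ := fun i => ∑ j, (f j).eval (i : ℂ) * lam j ^ i with hh
  have hrec : ∀ i, ∑ k ∈ range (r + 1), q.coeff k * h (i + k) = 0 := by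
    intro i
    have e1 : ∑ k ∈ range (r + 1), q.coeff k * h (i + k) =
        ∑ j, ∑ k ∈ range (q.natDegree + 1),
          q.coeff k * ((f j).eval ((i + k : ℕ) : ℂ) * lam j ^ (i + k)) := by
      rw [← hqdeg]
      rw [Finset.sum_comm]
      refine Finset.sum_congr rfl fun k _ => ?_
      rw [hh, Finset.mul_sum]
    rw [e1]
    refine Finset.sum_eq_zero fun j _ => ?_
    exact rec_step q (lam j) (l j)
      (Finset.dvd_prod_of_mem _ (Finset.mem_univ j)) (f j) (hdeg j) i
  have hall : ∀ i, h i = 0 := by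
    intro i
    induction i using Nat.strong_induction_on with
    | _ i IH =>
      by_cases hi : i < r
      · exact hvan i (lt_of_lt_of_le hi hK)
      · have hrec' := hrec (i - r)
        rw [Finset.sum_range_succ] at hrec'
        have hz : ∑ k ∈ range r, q.coeff k * h (i - r + k) = 0 :=
          Finset.sum_eq_zero fun k hk => by
            rw [IH _ (by have := Finset.mem_range.mp hk; omega), mul_zero]
        rw [hz, zero_add, hcoefr, one_mul] at hrec'
        rwa [show i - r + r = i by omega] at hrec'
  -- transfer to the Finset-indexed independence lemma
  set s : Finset ℂ := Finset.image lam Finset.univ with hs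
  set F : ℂ → ℂ[X] := fun μ => ∑ j, if lam j = μ then f j else 0 with hF
  have hFlam : ∀ j, F (lam j) = f j := by
    intro j
    rw [hF]
    simp only [hinj.eq_iff]
    rw [Finset.sum_ite_eq' Finset.univ j f]
    simp
  have hs0 : ∀ μ ∈ s, μ ≠ 0 := by
    intro μ hμ
    obtain ⟨j, _, rfl⟩ := Finset.mem_image.mp hμ
    exact h0 j
  have hsvan : ∀ i : ℕ, ∑ μ ∈ s, (F μ).eval (i : ℂ) * μ ^ i = 0 := by
    intro i
    rw [hs, Finset.sum_image (fun a _ b _ hab => hinj hab)]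
    rw [← hall i, hh]
    exact Finset.sum_congr rfl fun j _ => by rw [hFlam]
  intro j
  rw [← hFlam j]
  exact indep_aux _ s F le_rfl hs0 hsvan (lam j) (Finset.mem_image_of_mem _ (Finset.mem_univ j))

lemma sum_tri (L : ℕ) (G : ℕ → ℕ → ℂ) :
    ∑ t ∈ range L, ∑ m ∈ range (t + 1), G t m =
    ∑ m ∈ range L, ∑ t ∈ Ico m L, G t m := by
  refine Finset.sum_comm' ?_
  intro t m
  simp only [Finset.mem_range, Finset.mem_Ico]
  omega

end AuxiliaryLemmas

section Main
open Polynomial Finset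

/-- If `x̂[k] = ∑_j ∑_{l<l_j} a_{j,l} k^l λ_j^k` with distinct nonzero
`λ_j` and nonzero leading coefficients, `r = ∑_j l_j`, and `min{n−d+1, d} > r`, then the
Hankel matrix `𝓗(x̂)` has rank exactly `r`. -/
theorem hankel_rank_eq_of_exponential_polynomial
    (p n d : ℕ) (hp : 0 < p) (lam : Fin p → ℂ)
    (hinj : Function.Injective lam) (h0 : ∀ j, lam j ≠ 0)
    (l : Fin p → ℕ) (hl : ∀ j, 0 < l j)
    (a : (j : Fin p) → Fin (l j) → ℂ)
    (hlead : ∀ j, a j ⟨l j - 1, Nat.sub_lt (hl j) Nat.one_pos⟩ ≠ 0)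
    (xh : Fin n → ℂ)
    (hx : ∀ k : Fin n, xh k =
      ∑ j, ∑ i : Fin (l j), a j i * (k.val : ℂ) ^ (i : ℕ) * lam j ^ (k.val : ℕ))
    (hd : d ≤ n) (h1 : (∑ j, l j) < n - d + 1) (h2 : (∑ j, l j) < d) :
    (hankel n d xh).rank = ∑ j, l j := by
  classical
  -- totalized coefficients
  set a' : Fin p → ℕ → ℂ := fun j t => if h : t < l j then a j ⟨t, h⟩ else 0 with ha'
  have ha'eq : ∀ (j : Fin p) (m : Fin (l j)), a' j m.val = a j m := by
    intro j m; rw [ha']; simp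
  have ha'lead : ∀ j, a' j (l j - 1) ≠ 0 := by
    intro j; rw [ha']
    simp only [dif_pos (Nat.sub_lt (hl j) Nat.one_pos)]
    exact hlead j
  -- the factor polynomials
  set bpoly : Fin p → ℕ → ℂ[X] := fun j m =>
    ∑ t ∈ Ico m (l j), C (a' j t * (t.choose m)) * X ^ (t - m) with hbp
  -- factor matrices
  set U : Matrix (Fin (n - d + 1)) ((j : Fin p) × Fin (l j)) ℂ :=
    fun i jm => (i.val : ℂ) ^ (jm.2 : ℕ) * lam jm.1 ^ i.val with hU
  set W : Matrix ((j : Fin p) × Fin (l j)) (Fin d) ℂ :=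
    fun jm k => (bpoly jm.1 jm.2).eval (k.val : ℂ) * lam jm.1 ^ k.val with hW
  have hbpeval : ∀ (j : Fin p) (m : ℕ) (x : ℂ),
      (bpoly j m).eval x = ∑ t ∈ Ico m (l j), a' j t * (t.choose m) * x ^ (t - m) := by
    intro j m x
    rw [hbp, Polynomial.eval_finset_sum]
    exact Finset.sum_congr rfl fun t _ => by simp
  -- the key binomial resummation
  have claim : ∀ (j : Fin p) (iv kv : ℕ),
      ∑ t ∈ range (l j), a' j t * ((iv : ℂ) + (kv : ℂ)) ^ t * lam j ^ (iv + kv) =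
      ∑ m ∈ range (l j), ((iv : ℂ) ^ m * lam j ^ iv) *
        ((bpoly j m).eval (kv : ℂ) * lam j ^ kv) := by
    intro j iv kv
    have e1 : ∑ t ∈ range (l j), a' j t * ((iv : ℂ) + (kv : ℂ)) ^ t * lam j ^ (iv + kv) =
        ∑ t ∈ range (l j), ∑ m ∈ range (t + 1),
          (a' j t * (t.choose m) * ((iv : ℂ) ^ m * (kv : ℂ) ^ (t - m))) *
            (lam j ^ iv * lam j ^ kv) := by
      refine Finset.sum_congr rfl fun t _ => ?_
      rw [add_pow, pow_add]
      simp only [Finset.sum_mul, Finset.mul_sum]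
      refine Finset.sum_congr rfl fun m _ => by ring
    rw [e1, sum_tri]
    refine Finset.sum_congr rfl fun m _ => ?_
    rw [hbpeval, Finset.sum_mul, Finset.mul_sum]
    refine Finset.sum_congr rfl fun t _ => by ring
  -- the factorization
  have hUW : hankel n d xh = U * W := by
    ext i k
    have hik : i.val + k.val < n := by
      have h1 := i.isLt; have h2 := k.isLt; omega
    rw [hankel, dif_pos hik, hx, Matrix.mul_apply, ← Finset.univ_sigma_univ,
      Finset.sum_sigma]
    refine Finset.sum_congr rfl fun j _ => ?_
    have e2 : ∑ m : Fin (l j),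
        a j m * (((⟨i.val + k.val, hik⟩ : Fin n).val : ℂ)) ^ (m : ℕ) *
          lam j ^ ((⟨i.val + k.val, hik⟩ : Fin n).val) =
        ∑ t ∈ range (l j), a' j t * ((i.val : ℂ) + (k.val : ℂ)) ^ t *
          lam j ^ (i.val + k.val) := by
      rw [← Fin.sum_univ_eq_sum_range
        (fun t => a' j t * ((i.val : ℂ) + (k.val : ℂ)) ^ t * lam j ^ (i.val + k.val))]
      refine Finset.sum_congr rfl fun m _ => ?_
      rw [ha'eq]
      push_cast
      rfl

    rw [e2, claim j i.val k.val, ← Fin.sum_univ_eq_sum_range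
      (fun m => ((i.val : ℂ) ^ m * lam j ^ i.val) *
        ((bpoly j m).eval (k.val : ℂ) * lam j ^ k.val))]
  have hUinj : Function.Injective U.mulVecLin := by
    rw [← LinearMap.ker_eq_bot, LinearMap.ker_eq_bot']
    intro c hc
    set c' : Fin p → ℕ → ℂ := fun j m => if h : m < l j then c ⟨j, ⟨m, h⟩⟩ else 0 with hc'
    have hc'eq : ∀ (j : Fin p) (m : Fin (l j)), c' j m.val = c ⟨j, m⟩ := by
      intro j m; rw [hc']; simp
    set g : Fin p → ℂ[X] := fun j => ∑ m ∈ range (l j), C (c' j m) * X ^ m with hgdef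
    have hgdeg : ∀ j, (g j).natDegree < l j := by
      intro j
      have : (g j).natDegree ≤ l j - 1 := by
        refine Polynomial.natDegree_sum_le_of_forall_le _ _ fun m hm => ?_
        refine le_trans (Polynomial.natDegree_C_mul_le _ _) ?_
        rw [Polynomial.natDegree_X_pow]
        have := Finset.mem_range.mp hm; omega
      have := hl j; omega
    have hgvan : ∀ i : ℕ, i < n - d + 1 → ∑ j, (g j).eval (i : ℂ) * lam j ^ i = 0 := by
      intro i hi
      have h3 := congrFun hc ⟨i, hi⟩
      rw [Matrix.mulVecLin_apply] at h3
      have h4 : U.mulVec c ⟨i, hi⟩ = ∑ j, (g j).eval (i : ℂ) * lam j ^ i := by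
        show ∑ jm, U ⟨i, hi⟩ jm * c jm = _
        rw [← Finset.univ_sigma_univ, Finset.sum_sigma]
        refine Finset.sum_congr rfl fun j _ => ?_
        rw [hgdef]
        simp only [Polynomial.eval_finset_sum, Polynomial.eval_mul, Polynomial.eval_C,
          Polynomial.eval_pow, Polynomial.eval_X]
        rw [Finset.sum_mul, ← Fin.sum_univ_eq_sum_range
          (fun m => c' j m * (i : ℂ) ^ m * lam j ^ i)]
        refine Finset.sum_congr rfl fun m _ => ?_
        rw [hc'eq, hU]
        ring
      rw [h4] at h3
      simpa using h3
    have hg0 := lemmaA p lam hinj h0 l g hgdeg (n - d + 1) (le_of_lt h1) hgvan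
    funext jm
    obtain ⟨j, m⟩ := jm
    have hco : (g j).coeff m.val = c' j m.val := by
      rw [hgdef, Polynomial.finset_sum_coeff]
      rw [Finset.sum_eq_single m.val]
      · rw [Polynomial.coeff_C_mul, Polynomial.coeff_X_pow, if_pos rfl, mul_one]
      · intro b _ hb
        rw [Polynomial.coeff_C_mul, Polynomial.coeff_X_pow, if_neg (fun h => hb h.symm),
          mul_zero]
      · intro h; exact absurd (Finset.mem_range.mpr m.isLt) h
    rw [hg0 j, Polynomial.coeff_zero] at hco
    show c ⟨j, m⟩ = 0
    rw [← hc'eq, ← hco]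
  have hbcoeff : ∀ (j : Fin p) (m' e : ℕ), (bpoly j m').coeff e =
      ∑ t ∈ Ico m' (l j), (a' j t * (t.choose m')) * (if e = t - m' then 1 else 0) := by
    intro j m' e
    rw [hbp]
    dsimp only
    rw [Polynomial.finset_sum_coeff]
    exact Finset.sum_congr rfl fun t _ => by
      rw [Polynomial.coeff_C_mul, Polynomial.coeff_X_pow]
  have hWinj : Function.Injective (Wᵀ.mulVecLin) := by
    rw [← LinearMap.ker_eq_bot, LinearMap.ker_eq_bot']
    intro c hc
    set c' : Fin p → ℕ → ℂ := fun j m => if h : m < l j then c ⟨j, ⟨m, h⟩⟩ else 0 with hc'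
    have hc'eq : ∀ (j : Fin p) (m : Fin (l j)), c' j m.val = c ⟨j, m⟩ := by
      intro j m; rw [hc']; simp
    set g : Fin p → ℂ[X] := fun j => ∑ m ∈ range (l j), C (c' j m) * bpoly j m with hgdef
    have hbdeg : ∀ (j : Fin p) (m : ℕ), (bpoly j m).natDegree ≤ l j - 1 := by
      intro j m
      rw [hbp]
      refine Polynomial.natDegree_sum_le_of_forall_le _ _ fun t ht => ?_
      refine le_trans (Polynomial.natDegree_C_mul_le _ _) ?_
      rw [Polynomial.natDegree_X_pow]
      have := Finset.mem_Ico.mp ht; omega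
    have hgdeg : ∀ j, (g j).natDegree < l j := by
      intro j
      have : (g j).natDegree ≤ l j - 1 := by
        refine Polynomial.natDegree_sum_le_of_forall_le _ _ fun m _ => ?_
        exact le_trans (Polynomial.natDegree_C_mul_le _ _) (hbdeg j m)
      have := hl j; omega
    have hgvan : ∀ i : ℕ, i < d → ∑ j, (g j).eval (i : ℂ) * lam j ^ i = 0 := by
      intro i hi
      have h3 := congrFun hc ⟨i, hi⟩
      rw [Matrix.mulVecLin_apply] at h3
      have h4 : Wᵀ.mulVec c ⟨i, hi⟩ = ∑ j, (g j).eval (i : ℂ) * lam j ^ i := by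
        show ∑ jm, Wᵀ ⟨i, hi⟩ jm * c jm = _
        rw [← Finset.univ_sigma_univ, Finset.sum_sigma]
        refine Finset.sum_congr rfl fun j _ => ?_
        rw [hgdef]
        simp only [Polynomial.eval_finset_sum, Polynomial.eval_mul, Polynomial.eval_C]
        rw [Finset.sum_mul, ← Fin.sum_univ_eq_sum_range
          (fun m => c' j m * (bpoly j m).eval (i : ℂ) * lam j ^ i)]
        refine Finset.sum_congr rfl fun m _ => ?_
        rw [hc'eq, Matrix.transpose_apply, hW]
        ring
      rw [h4] at h3
      simpa using h3
    have hg0 := lemmaA p lam hinj h0 l g hgdeg d (le_of_lt h2) hgvan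
    -- extract coefficients by strong induction
    have hczero : ∀ (j : Fin p) (m : ℕ), m < l j → c' j m = 0 := by
      intro j m
      induction m using Nat.strong_induction_on with
      | _ m IH =>
        intro hm
        set e := l j - 1 - m with he
        have hcoeff0 : (g j).coeff e = 0 := by rw [hg0 j, Polynomial.coeff_zero]
        rw [hgdef] at hcoeff0
        rw [Polynomial.finset_sum_coeff] at hcoeff0
        have hsingle : ∑ m' ∈ range (l j), (C (c' j m') * bpoly j m').coeff e =
            (C (c' j m) * bpoly j m).coeff e := by
          refine Finset.sum_eq_single_of_mem m (Finset.mem_range.mpr hm) fun m' hm' hne => ?_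
          rw [Polynomial.coeff_C_mul]
          rcases lt_or_gt_of_ne hne with hlt | hgt
          · rw [IH m' hlt (Finset.mem_range.mp hm')]
            simp
          · rw [hbcoeff]
            have : ∀ t ∈ Ico m' (l j),
                (a' j t * (t.choose m')) * (if e = t - m' then 1 else 0) = 0 := by
              intro t ht
              have := Finset.mem_Ico.mp ht
              rw [if_neg (by omega), mul_zero]
            rw [Finset.sum_eq_zero this, mul_zero]
        rw [hsingle, Polynomial.coeff_C_mul, hbcoeff] at hcoeff0
        have hsum : ∑ t ∈ Ico m (l j),
            (a' j t * (t.choose m)) * (if e = t - m then 1 else 0) =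
            a' j (l j - 1) * ((l j - 1).choose m) := by
          rw [Finset.sum_eq_single_of_mem (l j - 1)
            (Finset.mem_Ico.mpr ⟨by omega, by omega⟩)]
          · rw [if_pos (by omega), mul_one]
          · intro t ht hne
            have := Finset.mem_Ico.mp ht
            rw [if_neg (by omega), mul_zero]
        rw [hsum] at hcoeff0
        have hch : ((l j - 1).choose m : ℂ) ≠ 0 := by
          simp only [ne_eq, Nat.cast_eq_zero]
          have := Nat.choose_pos (n := l j - 1) (k := m) (by omega)
          omega
        rcases mul_eq_zero.mp hcoeff0 with h | h
        · exact h
        · exact absurd h (mul_ne_zero (ha'lead j) hch)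
    funext jm
    obtain ⟨j, m⟩ := jm
    show c ⟨j, m⟩ = 0
    rw [← hc'eq, hczero j m.val m.isLt]
  -- assemble the rank computation
  have hcard : Fintype.card ((j : Fin p) × Fin (l j)) = ∑ j, l j := by
    simp [Fintype.card_sigma]
  rw [hUW]
  show Module.finrank ℂ (LinearMap.range (U * W).mulVecLin) = _
  rw [Matrix.mulVecLin_mul, LinearMap.range_comp]
  rw [← (Submodule.equivMapOfInjective U.mulVecLin hUinj
    (LinearMap.range W.mulVecLin)).finrank_eq]
  have : Module.finrank ℂ (LinearMap.range W.mulVecLin) = W.rank := rfl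
  rw [this, ← Matrix.rank_transpose]
  show Module.finrank ℂ (LinearMap.range Wᵀ.mulVecLin) = _
  rw [LinearMap.finrank_range_of_inj hWinj]
  simp [hcard]

end Main
end

section
/- Let A_1,…,A_n ∈ ℂ^{n1×n2} be orthonormal with respect to the Frobenius inner product ⟨A,B⟩ = Tr(AᴴB), and define the injective linear lifting 𝓛 : ℂⁿ → ℂ^{n1×n2} by 𝓛(x) = ∑_{k=1}^n x_k·A_k. Let 𝒜(M) = ∑_{k=1}^n A_k·⟨A_k, M⟩. Fix x ∈ ℂⁿ and suppose 𝓛(x) = U·Σ·Vᴴ where U ∈ ℂ^{n1×r} and V ∈ ℂ^{n2×r} have orthonormal columns and Σ ∈ ℂ^{r×r} is diagonal with strictly positive diagonal entries. Define 𝒫_T(M) = UUᴴM + MVVᴴ − UUᴴMVVᴴ and 𝒫_{T⊥}(M) = M − 𝒫_T(M). Let ω = (ω_1,…,ω_m) ∈ {1,…,n}^m, let 𝒜_Ω(M) = ∑_{j=1}^m A_{ω_j}·⟨A_{ω_j}, M⟩, and let 𝒜'_Ω(M) = ∑_{k ∈ S} A_k·⟨A_k, M⟩ where S = {ω_1,…,ω_m}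 is the set of distinct sampled indices. Suppose: (i) ‖(n/m)·𝒫_T 𝒜_Ω 𝒫_T − 𝒫_T 𝒜 𝒫_T‖ ≤ 1/2, where ‖·‖ is the operator norm induced by the Frobenius norm; and (ii) there exists W ∈ ℂ^{n1×n2} with (𝒜 − 𝒜'_Ω)(W) = 0, ‖𝒫_T(W − UVᴴ)‖_F ≤ 1/(7n), and ‖𝒫_{T⊥}(W)‖ ≤ 1/2 (spectral norm). Then x is the unique minimizer of ‖𝓛(g)‖_* over all g ∈ ℂⁿ with g_{ω_j} = x_{ω_j} for every j = 1,…,m; that is, every such feasible g ≠ x satisfies ‖𝓛(g)‖_* > ‖𝓛(x)‖_*. -/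
open Matrix
open scoped ComplexOrder

/-- Frobenius inner product `⟨A,B⟩ = Tr(AᴴB)`. -/
noncomputable def frobInner {m n : ℕ} (A B : Matrix (Fin m) (Fin n) ℂ) : ℂ :=
  (Aᴴ * B).trace

/-- Frobenius norm. -/
noncomputable def frobNorm {m n : ℕ} (A : Matrix (Fin m) (Fin n) ℂ) : ℝ :=
  Real.sqrt (∑ i, ∑ j, ‖A i j‖ ^ 2)

/-- Spectral norm (largest singular value), as the operator norm of the induced map
between Euclidean spaces. -/
noncomputable def specNorm {m n : ℕ} (A : Matrix (Fin m) (Fin n) ℂ) : ℝ :=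
  ‖LinearMap.toContinuousLinearMap (Matrix.toEuclideanLin A)‖

/-- Nuclear norm: trace of the positive semidefinite square root of `AᴴA`. -/
noncomputable def nuclearNorm {m n : ℕ} (A : Matrix (Fin m) (Fin n) ℂ) : ℝ :=
  (((Matrix.posSemidef_conjTranspose_mul_self A).1.eigenvectorUnitary.1 *
      diagonal (((↑) : ℝ → ℂ) ∘ (√·) ∘ (Matrix.posSemidef_conjTranspose_mul_self A).1.eigenvalues) *
      (star (Matrix.posSemidef_conjTranspose_mul_self A).1.eigenvectorUnitary :
        Matrix (Fin n) (Fin n) ℂ)).trace).re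

/-- Projection onto the tangent space `T`:
`𝒫_T(M) = UUᴴM + MVVᴴ − UUᴴMVVᴴ`. -/
noncomputable def PT {n1 n2 r : ℕ} (U : Matrix (Fin n1) (Fin r) ℂ)
    (V : Matrix (Fin n2) (Fin r) ℂ) (M : Matrix (Fin n1) (Fin n2) ℂ) :
    Matrix (Fin n1) (Fin n2) ℂ :=
  U * Uᴴ * M + M * (V * Vᴴ) - U * Uᴴ * M * (V * Vᴴ)

/-- Projection onto the orthogonal complement of the tangent space. -/
noncomputable def PTperp {n1 n2 r : ℕ} (U : Matrix (Fin n1) (Fin r) ℂ)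
    (V : Matrix (Fin n2) (Fin r) ℂ) (M : Matrix (Fin n1) (Fin n2) ℂ) :
    Matrix (Fin n1) (Fin n2) ℂ :=
  M - PT U V M

/-- `𝒜(M) = ∑_{k=1}^n A_k·⟨A_k, M⟩`. -/
noncomputable def Aproj {n1 n2 n : ℕ} (A : Fin n → Matrix (Fin n1) (Fin n2) ℂ)
    (M : Matrix (Fin n1) (Fin n2) ℂ) : Matrix (Fin n1) (Fin n2) ℂ :=
  ∑ k, frobInner (A k) M • A k

/-- `𝒜_Ω(M) = ∑_{j=1}^m A_{ω_j}·⟨A_{ω_j}, M⟩` (with multiplicity). -/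
noncomputable def AsampMulti {n1 n2 n m : ℕ} (A : Fin n → Matrix (Fin n1) (Fin n2) ℂ)
    (ω : Fin m → Fin n) (M : Matrix (Fin n1) (Fin n2) ℂ) : Matrix (Fin n1) (Fin n2) ℂ :=
  ∑ j, frobInner (A (ω j)) M • A (ω j)

/-- `𝒜'_Ω(M) = ∑_{k ∈ {ω_1,…,ω_m}} A_k·⟨A_k, M⟩` (distinct sampled indices). -/
noncomputable def AsampSet {n1 n2 n m : ℕ} (A : Fin n → Matrix (Fin n1) (Fin n2) ℂ)
    (ω : Fin m → Fin n) (M : Matrix (Fin n1) (Fin n2) ℂ) : Matrix (Fin n1) (Fin n2) ℂ :=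
  ∑ k ∈ Finset.image ω Finset.univ, frobInner (A k) M • A k

/-- Operator norm induced by the Frobenius norm of a map on matrices. -/
noncomputable def opNormFro {n1 n2 : ℕ}
    (f : Matrix (Fin n1) (Fin n2) ℂ → Matrix (Fin n1) (Fin n2) ℂ) : ℝ :=
  sSup {c : ℝ | ∃ M, frobNorm M ≤ 1 ∧ c = frobNorm (f M)}

-- Part 1 : euclidean vector helpers and frobenius structure
namespace DC

noncomputable def ev {k : ℕ} (v : Fin k → ℂ) : EuclideanSpace ℂ (Fin k) :=
  (WithLp.equiv 2 _).symm v

noncomputable def vn {k : ℕ} (v : Fin k → ℂ) : ℝ := ‖ev v‖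

lemma vn_nonneg {k : ℕ} (v : Fin k → ℂ) : 0 ≤ vn v := norm_nonneg _

lemma inner_ev {k : ℕ} (u v : Fin k → ℂ) :
    (inner ℂ (ev u) (ev v) : ℂ) = dotProduct (star u) v := by
  rw [EuclideanSpace.inner_eq_star_dotProduct]
  exact dotProduct_comm _ _

lemma vn_sq {k : ℕ} (v : Fin k → ℂ) :
    vn v ^ 2 = (dotProduct (star v) v).re := by
  rw [← inner_ev, ← RCLike.re_to_complex]
  rw [inner_self_eq_norm_sq (𝕜 := ℂ) (ev v)]
  rfl

lemma re_dot_le {k : ℕ} (u v : Fin k → ℂ) :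
    (dotProduct (star u) v).re ≤ vn u * vn v := by
  rw [← inner_ev]
  exact re_inner_le_norm (𝕜 := ℂ) _ _

lemma vn_le_of_sq_le {k l : ℕ} {v : Fin k → ℂ} {w : Fin l → ℂ} {c : ℝ}
    (hc : 0 ≤ c) (h : vn v ^ 2 ≤ c ^ 2 * vn w ^ 2) : vn v ≤ c * vn w := by
  nlinarith [vn_nonneg v, vn_nonneg w, mul_nonneg hc (vn_nonneg w)]

/-- the fundamental dot product identity -/
lemma dot_mulVec_mulVec {a b c : ℕ} (C : Matrix (Fin a) (Fin b) ℂ)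
    (D : Matrix (Fin a) (Fin c) ℂ) (z : Fin b → ℂ) (w : Fin c → ℂ) :
    dotProduct (star (C *ᵥ z)) (D *ᵥ w)
      = dotProduct (star z) ((Cᴴ * D) *ᵥ w) := by
  rw [Matrix.star_mulVec, Matrix.dotProduct_mulVec, Matrix.vecMul_vecMul,
    ← Matrix.dotProduct_mulVec]

lemma vn_mulVec_sq {a b : ℕ} (C : Matrix (Fin a) (Fin b) ℂ) (z : Fin b → ℂ) :
    vn (C *ᵥ z) ^ 2 = (dotProduct (star z) ((Cᴴ * C) *ᵥ z)).re := by
  rw [vn_sq, dot_mulVec_mulVec]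

end DC
namespace DC

noncomputable def em {a b : ℕ} (M : Matrix (Fin a) (Fin b) ℂ) :
    EuclideanSpace ℂ (Fin a × Fin b) :=
  (WithLp.equiv 2 _).symm (fun p => M p.1 p.2)

variable {a b : ℕ}

lemma em_add (M N : Matrix (Fin a) (Fin b) ℂ) : em (M + N) = em M + em N := rfl
lemma em_sub (M N : Matrix (Fin a) (Fin b) ℂ) : em (M - N) = em M - em N := rfl
lemma em_neg (M : Matrix (Fin a) (Fin b) ℂ) : em (-M) = -em M := rfl
lemma em_zero : em (0 : Matrix (Fin a) (Fin b) ℂ) = 0 := rfl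
lemma em_smul (c : ℂ) (M : Matrix (Fin a) (Fin b) ℂ) : em (c • M) = c • em M := rfl

lemma em_sum {ι : Type*} (s : Finset ι) (f : ι → Matrix (Fin a) (Fin b) ℂ) :
    em (∑ i ∈ s, f i) = ∑ i ∈ s, em (f i) := by
  classical
  induction s using Finset.induction with
  | empty => simp [em_zero]
  | insert a s h ih => rw [Finset.sum_insert h, Finset.sum_insert h, em_add, ih]

lemma frobNorm_eq (M : Matrix (Fin a) (Fin b) ℂ) : frobNorm M = ‖em M‖ := by
  rw [frobNorm, EuclideanSpace.norm_eq]
  congr 1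
  rw [← Finset.sum_product']
  rfl

lemma frobInner_eq (M N : Matrix (Fin a) (Fin b) ℂ) :
    frobInner M N = (inner ℂ (em M) (em N) : ℂ) := by
  rw [frobInner, Matrix.trace]
  simp only [Matrix.diag_apply, Matrix.mul_apply, Matrix.conjTranspose_apply]
  rw [Finset.sum_comm, ← Finset.sum_product']
  rw [PiLp.inner_apply]
  simp only [RCLike.inner_apply]
  rw [Finset.univ_product_univ]
  exact Finset.sum_congr rfl fun x _ => mul_comm _ _

lemma frobNorm_nonneg (M : Matrix (Fin a) (Fin b) ℂ) : 0 ≤ frobNorm M := by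
  rw [frobNorm_eq]; exact norm_nonneg _

lemma frobNorm_sq (M : Matrix (Fin a) (Fin b) ℂ) :
    frobNorm M ^ 2 = (frobInner M M).re := by
  rw [frobNorm_eq, frobInner_eq, ← RCLike.re_to_complex,
    inner_self_eq_norm_sq (𝕜 := ℂ) (em M)]

lemma frobNorm_zero : frobNorm (0 : Matrix (Fin a) (Fin b) ℂ) = 0 := by
  rw [frobNorm_eq, em_zero, norm_zero]

lemma frobNorm_eq_zero_iff {M : Matrix (Fin a) (Fin b) ℂ} : frobNorm M = 0 ↔ M = 0 := by
  rw [frobNorm_eq, norm_eq_zero]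
  constructor
  · intro h
    ext i j
    have := congrArg (fun f => f (i, j)) h
    simpa [em] using this
  · rintro rfl; exact em_zero

lemma frobNorm_add_le (M N : Matrix (Fin a) (Fin b) ℂ) :
    frobNorm (M + N) ≤ frobNorm M + frobNorm N := by
  rw [frobNorm_eq, frobNorm_eq, frobNorm_eq, em_add]; exact norm_add_le _ _

lemma frobNorm_neg (M : Matrix (Fin a) (Fin b) ℂ) : frobNorm (-M) = frobNorm M := by
  rw [frobNorm_eq, frobNorm_eq, em_neg, norm_neg]

lemma frobNorm_sub_le (M N : Matrix (Fin a) (Fin b) ℂ) :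
    frobNorm (M - N) ≤ frobNorm M + frobNorm N := by
  rw [sub_eq_add_neg, ← frobNorm_neg N]; exact frobNorm_add_le _ _

lemma frobNorm_smul (c : ℂ) (M : Matrix (Fin a) (Fin b) ℂ) :
    frobNorm (c • M) = ‖c‖ * frobNorm M := by
  rw [frobNorm_eq, frobNorm_eq, em_smul, norm_smul]

lemma frobNorm_sum_le {ι : Type*} (s : Finset ι) (f : ι → Matrix (Fin a) (Fin b) ℂ) :
    frobNorm (∑ i ∈ s, f i) ≤ ∑ i ∈ s, frobNorm (f i) := by
  rw [frobNorm_eq, em_sum]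
  refine (norm_sum_le _ _).trans ?_
  exact le_of_eq (Finset.sum_congr rfl fun i _ => (frobNorm_eq _).symm)

lemma abs_frobInner_le (M N : Matrix (Fin a) (Fin b) ℂ) :
    ‖frobInner M N‖ ≤ frobNorm M * frobNorm N := by
  rw [frobInner_eq, frobNorm_eq, frobNorm_eq]
  exact norm_inner_le_norm (𝕜 := ℂ) _ _

lemma re_frobInner_le (M N : Matrix (Fin a) (Fin b) ℂ) :
    (frobInner M N).re ≤ frobNorm M * frobNorm N := by
  refine le_trans ?_ (abs_frobInner_le M N)
  exact (Complex.re_le_norm _)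

-- algebraic lemmas for frobInner
lemma frobInner_add_right (M N P : Matrix (Fin a) (Fin b) ℂ) :
    frobInner M (N + P) = frobInner M N + frobInner M P := by
  simp [frobInner, Matrix.mul_add]

lemma frobInner_sub_right (M N P : Matrix (Fin a) (Fin b) ℂ) :
    frobInner M (N - P) = frobInner M N - frobInner M P := by
  simp [frobInner, Matrix.mul_sub]

lemma frobInner_add_left (M N P : Matrix (Fin a) (Fin b) ℂ) :
    frobInner (M + N) P = frobInner M P + frobInner N P := by
  simp [frobInner, Matrix.add_mul]

lemma frobInner_smul_right (c : ℂ) (M N : Matrix (Fin a) (Fin b) ℂ) :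
    frobInner M (c • N) = c * frobInner M N := by
  simp [frobInner, Matrix.mul_smul]

lemma frobInner_smul_left (c : ℂ) (M N : Matrix (Fin a) (Fin b) ℂ) :
    frobInner (c • M) N = (starRingEnd ℂ) c * frobInner M N := by
  simp [frobInner, Matrix.smul_mul]

lemma frobInner_sum_right {ι : Type*} (s : Finset ι) (M : Matrix (Fin a) (Fin b) ℂ)
    (f : ι → Matrix (Fin a) (Fin b) ℂ) :
    frobInner M (∑ i ∈ s, f i) = ∑ i ∈ s, frobInner M (f i) := by
  simp [frobInner, Matrix.mul_sum, Matrix.trace_sum]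

lemma frobInner_sum_left {ι : Type*} (s : Finset ι) (M : Matrix (Fin a) (Fin b) ℂ)
    (f : ι → Matrix (Fin a) (Fin b) ℂ) :
    frobInner (∑ i ∈ s, f i) M = ∑ i ∈ s, frobInner (f i) M := by
  simp [frobInner, Matrix.conjTranspose_sum, Matrix.sum_mul, Matrix.trace_sum]

lemma frobInner_conj_symm (M N : Matrix (Fin a) (Fin b) ℂ) :
    frobInner M N = (starRingEnd ℂ) (frobInner N M) := by
  rw [frobInner, frobInner,
    show (starRingEnd ℂ) (Nᴴ * M).trace = star (Nᴴ * M).trace from rfl,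
    ← Matrix.trace_conjTranspose, Matrix.conjTranspose_mul,
    Matrix.conjTranspose_conjTranspose]

lemma frobInner_zero_right (M : Matrix (Fin a) (Fin b) ℂ) : frobInner M 0 = 0 := by
  simp [frobInner]

/-- self-adjoint idempotent maps are contractions -/
lemma proj_norm_le (f : Matrix (Fin a) (Fin b) ℂ → Matrix (Fin a) (Fin b) ℂ)
    (hadj : ∀ M N, frobInner (f M) N = frobInner M (f N))
    (hidem : ∀ M, f (f M) = f M) (M : Matrix (Fin a) (Fin b) ℂ) :
    frobNorm (f M) ≤ frobNorm M := by
  by_cases h0 : frobNorm (f M) = 0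
  · rw [h0]; exact frobNorm_nonneg M
  · have h1 : frobNorm (f M) ^ 2 = (frobInner M (f M)).re := by
      rw [frobNorm_sq, hadj, hidem]
    have h2 : (frobInner M (f M)).re ≤ frobNorm M * frobNorm (f M) := re_frobInner_le _ _
    have h3 : 0 < frobNorm (f M) := lt_of_le_of_ne (frobNorm_nonneg _) (Ne.symm h0)
    nlinarith

end DC
namespace DC

variable {n1 n2 r : ℕ} (U : Matrix (Fin n1) (Fin r) ℂ) (V : Matrix (Fin n2) (Fin r) ℂ)

lemma PT_add (M N : Matrix (Fin n1) (Fin n2) ℂ) :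
    PT U V (M + N) = PT U V M + PT U V N := by
  simp only [PT, Matrix.mul_add, Matrix.add_mul]; abel

lemma PT_sub (M N : Matrix (Fin n1) (Fin n2) ℂ) :
    PT U V (M - N) = PT U V M - PT U V N := by
  simp only [PT, Matrix.mul_sub, Matrix.sub_mul]; abel

lemma PT_smul (c : ℂ) (M : Matrix (Fin n1) (Fin n2) ℂ) :
    PT U V (c • M) = c • PT U V M := by
  simp only [PT, Matrix.mul_smul, Matrix.smul_mul, smul_add, smul_sub]

lemma PT_zero : PT U V (0 : Matrix (Fin n1) (Fin n2) ℂ) = 0 := by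
  simp [PT]

variable (hU : Uᴴ * U = 1) (hV : Vᴴ * V = 1)
include hU hV

lemma PT_idem (M : Matrix (Fin n1) (Fin n2) ℂ) : PT U V (PT U V M) = PT U V M := by
  have hU' : ∀ X : Matrix (Fin r) (Fin n2) ℂ, Uᴴ * (U * X) = X := fun X => by
    rw [← Matrix.mul_assoc, hU, Matrix.one_mul]
  have hV' : ∀ X : Matrix (Fin r) (Fin n2) ℂ, Vᴴ * (V * X) = X := fun X => by
    rw [← Matrix.mul_assoc, hV, Matrix.one_mul]
  simp only [PT, Matrix.mul_add, Matrix.add_mul, Matrix.mul_sub, Matrix.sub_mul,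
    Matrix.mul_assoc, hU', hV']
  abel

omit hU hV in
lemma PT_adjoint (M N : Matrix (Fin n1) (Fin n2) ℂ) :
    frobInner (PT U V M) N = frobInner M (PT U V N) := by
  have tr1 : ((U * Uᴴ * M)ᴴ * N).trace = (Mᴴ * (U * Uᴴ * N)).trace := by
    simp only [Matrix.conjTranspose_mul, Matrix.conjTranspose_conjTranspose, Matrix.mul_assoc]
  have tr2 : ((M * (V * Vᴴ))ᴴ * N).trace = (Mᴴ * (N * (V * Vᴴ))).trace := by
    have e : (M * (V * Vᴴ))ᴴ * N = (V * Vᴴ) * (Mᴴ * N) := by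
      simp only [Matrix.conjTranspose_mul, Matrix.conjTranspose_conjTranspose,
        Matrix.mul_assoc]
    rw [e, Matrix.trace_mul_comm]
    congr 1
    simp only [Matrix.mul_assoc]
  have tr3 : ((U * Uᴴ * M * (V * Vᴴ))ᴴ * N).trace
      = (Mᴴ * (U * Uᴴ * N * (V * Vᴴ))).trace := by
    have e : (U * Uᴴ * M * (V * Vᴴ))ᴴ * N = (V * Vᴴ) * (Mᴴ * (U * (Uᴴ * N))) := by
      simp only [Matrix.conjTranspose_mul, Matrix.conjTranspose_conjTranspose,
        Matrix.mul_assoc]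
    rw [e, Matrix.trace_mul_comm]
    congr 1
    simp only [Matrix.mul_assoc]
  simp only [PT, frobInner, Matrix.conjTranspose_add, Matrix.conjTranspose_sub,
    Matrix.add_mul, Matrix.sub_mul, Matrix.mul_add, Matrix.mul_sub,
    Matrix.trace_add, Matrix.trace_sub]
  rw [tr1, tr2, tr3]

omit hU hV in
lemma PTperp_adjoint (M N : Matrix (Fin n1) (Fin n2) ℂ) :
    frobInner (PTperp U V M) N = frobInner M (PTperp U V N) := by
  simp only [PTperp, frobInner_sub_right]
  rw [show frobInner (M - PT U V M) N = frobInner M N - frobInner (PT U V M) N by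
    simp [frobInner, Matrix.conjTranspose_sub, Matrix.sub_mul]]
  rw [PT_adjoint]

lemma frobNorm_PT_le (M : Matrix (Fin n1) (Fin n2) ℂ) :
    frobNorm (PT U V M) ≤ frobNorm M :=
  proj_norm_le (PT U V) (PT_adjoint U V) (PT_idem U V hU hV) M

lemma PTperp_idem (M : Matrix (Fin n1) (Fin n2) ℂ) :
    PTperp U V (PTperp U V M) = PTperp U V M := by
  simp only [PTperp, PT_sub, PT_idem U V hU hV]
  abel

lemma frobNorm_PTperp_le (M : Matrix (Fin n1) (Fin n2) ℂ) :
    frobNorm (PTperp U V M) ≤ frobNorm M :=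
  proj_norm_le (PTperp U V) (PTperp_adjoint U V) (PTperp_idem U V hU hV) M

omit hV in
lemma conjTranspose_U_PTperp (M : Matrix (Fin n1) (Fin n2) ℂ) :
    Uᴴ * PTperp U V M = 0 := by
  have hU' : ∀ X : Matrix (Fin n1) (Fin n2) ℂ, Uᴴ * (U * (Uᴴ * X)) = Uᴴ * X := fun X => by
    rw [← Matrix.mul_assoc, ← Matrix.mul_assoc, hU, Matrix.one_mul]
  simp only [PTperp, PT, Matrix.mul_sub, Matrix.mul_add, Matrix.mul_assoc, hU']
  abel

omit hU in
lemma PTperp_V (M : Matrix (Fin n1) (Fin n2) ℂ) :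
    PTperp U V M * V = 0 := by
  simp only [PTperp, PT, Matrix.sub_mul, Matrix.add_mul, Matrix.mul_assoc, hV,
    Matrix.mul_one]
  abel

omit hU hV in
lemma PT_eq_zero_of (B : Matrix (Fin n1) (Fin n2) ℂ) (h1 : Uᴴ * B = 0) (h2 : B * V = 0) :
    PT U V B = 0 := by
  have h2' : ∀ X : Matrix (Fin r) (Fin n2) ℂ, B * (V * X) = 0 := fun X => by
    rw [← Matrix.mul_assoc, h2, Matrix.zero_mul]
  simp only [PT, Matrix.mul_assoc, h1, h2', Matrix.mul_zero, Matrix.zero_mul]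
  abel

lemma PT_UV : PT U V (U * Vᴴ) = U * Vᴴ := by
  have hU' : ∀ X : Matrix (Fin r) (Fin n2) ℂ, Uᴴ * (U * X) = X := fun X => by
    rw [← Matrix.mul_assoc, hU, Matrix.one_mul]
  have hV' : ∀ X : Matrix (Fin r) (Fin n2) ℂ, Vᴴ * (V * X) = X := fun X => by
    rw [← Matrix.mul_assoc, hV, Matrix.one_mul]
  simp only [PT, Matrix.mul_assoc, hU', hV']
  abel

lemma PT_PTperp_orth (C M : Matrix (Fin n1) (Fin n2) ℂ) :
    frobInner C M =
      frobInner (PT U V C) (PT U V M) + frobInner (PTperp U V C) (PTperp U V M) := by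
  have h1 : frobInner C M = frobInner C (PT U V M) + frobInner C (PTperp U V M) := by
    rw [← frobInner_add_right]
    congr 1
    simp [PTperp]
  have h2 : frobInner C (PT U V M) = frobInner (PT U V C) (PT U V M) := by
    rw [PT_adjoint, PT_idem U V hU hV, ← PT_adjoint]
  have h3 : frobInner C (PTperp U V M) = frobInner (PTperp U V C) (PTperp U V M) := by
    rw [PTperp_adjoint, PTperp_idem U V hU hV, ← PTperp_adjoint]
  rw [h1, h2, h3]

end DC
namespace DC

variable {n1 n2 n : ℕ} (A : Fin n → Matrix (Fin n1) (Fin n2) ℂ)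
  (horth : ∀ k l, frobInner (A k) (A l) = if k = l then 1 else 0)

include horth in
lemma frobNorm_A_one (k : Fin n) : frobNorm (A k) = 1 := by
  have h := frobNorm_sq (A k)
  rw [horth k k, if_pos rfl, Complex.one_re] at h
  have h0 := frobNorm_nonneg (A k)
  nlinarith

include horth in
lemma frobInner_A_lift (v : Fin n → ℂ) (k : Fin n) :
    frobInner (A k) (∑ l, v l • A l) = v k := by
  rw [frobInner_sum_right]
  rw [Finset.sum_eq_single k]
  · rw [frobInner_smul_right, horth k k, if_pos rfl, mul_one]
  · intro l _ hl
    rw [frobInner_smul_right, horth k l, if_neg (Ne.symm hl), mul_zero]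
  · intro h; exact absurd (Finset.mem_univ k) h

include horth in
lemma Aproj_lift (v : Fin n → ℂ) :
    Aproj A (∑ l, v l • A l) = ∑ l, v l • A l := by
  unfold Aproj
  refine Finset.sum_congr rfl fun k _ => ?_
  rw [frobInner_A_lift A horth]

lemma Aproj_adjoint (M N : Matrix (Fin n1) (Fin n2) ℂ) :
    frobInner (Aproj A M) N = frobInner M (Aproj A N) := by
  unfold Aproj
  rw [frobInner_sum_left, frobInner_sum_right]
  refine Finset.sum_congr rfl fun k _ => ?_
  rw [frobInner_smul_left, frobInner_smul_right, frobInner_conj_symm (A k) M,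
    Complex.conj_conj]
  ring

include horth in
lemma Aproj_idem (M : Matrix (Fin n1) (Fin n2) ℂ) : Aproj A (Aproj A M) = Aproj A M := by
  calc Aproj A (Aproj A M) = Aproj A (∑ l, frobInner (A l) M • A l) := rfl
    _ = ∑ l, frobInner (A l) M • A l := Aproj_lift A horth _
    _ = Aproj A M := rfl

include horth in
lemma frobNorm_Aproj_le (M : Matrix (Fin n1) (Fin n2) ℂ) :
    frobNorm (Aproj A M) ≤ frobNorm M :=
  proj_norm_le (Aproj A) (Aproj_adjoint A) (Aproj_idem A horth) M

include horth in
lemma frobNorm_AsampMulti_le {m : ℕ} (ω : Fin m → Fin n) (M : Matrix (Fin n1) (Fin n2) ℂ) :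
    frobNorm (AsampMulti A ω M) ≤ (m : ℝ) * frobNorm M := by
  unfold AsampMulti
  refine (frobNorm_sum_le _ _).trans ?_
  have : ∀ j : Fin m, frobNorm (frobInner (A (ω j)) M • A (ω j)) ≤ frobNorm M := by
    intro j
    rw [frobNorm_smul, frobNorm_A_one A horth, mul_one]
    have := abs_frobInner_le (A (ω j)) M
    rw [frobNorm_A_one A horth, one_mul] at this
    exact this
  calc ∑ j : Fin m, frobNorm (frobInner (A (ω j)) M • A (ω j))
      ≤ ∑ _j : Fin m, frobNorm M := Finset.sum_le_sum (fun j _ => this j)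
    _ = (m : ℝ) * frobNorm M := by simp [mul_comm]

lemma AsampMulti_lift_eq_zero {m : ℕ} (ω : Fin m → Fin n) (v : Fin n → ℂ)
    (hv : ∀ j, v (ω j) = 0) (horth' : ∀ k l, frobInner (A k) (A l) = if k = l then 1 else 0) :
    AsampMulti A ω (∑ l, v l • A l) = 0 := by
  unfold AsampMulti
  refine Finset.sum_eq_zero fun j _ => ?_
  rw [frobInner_A_lift A horth', hv j, zero_smul]

-- linearity of AsampMulti / Aproj in M
lemma AsampMulti_sub {m : ℕ} (ω : Fin m → Fin n) (M N : Matrix (Fin n1) (Fin n2) ℂ) :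
    AsampMulti A ω (M - N) = AsampMulti A ω M - AsampMulti A ω N := by
  unfold AsampMulti
  rw [← Finset.sum_sub_distrib]
  refine Finset.sum_congr rfl fun j _ => ?_
  rw [frobInner_sub_right, sub_smul]

lemma Aproj_sub (M N : Matrix (Fin n1) (Fin n2) ℂ) :
    Aproj A (M - N) = Aproj A M - Aproj A N := by
  unfold Aproj
  rw [← Finset.sum_sub_distrib]
  refine Finset.sum_congr rfl fun j _ => ?_
  rw [frobInner_sub_right, sub_smul]

lemma AsampMulti_smul {m : ℕ} (ω : Fin m → Fin n) (c : ℂ) (M : Matrix (Fin n1) (Fin n2) ℂ) :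
    AsampMulti A ω (c • M) = c • AsampMulti A ω M := by
  unfold AsampMulti
  rw [Finset.smul_sum]
  refine Finset.sum_congr rfl fun j _ => ?_
  rw [frobInner_smul_right, smul_smul]

lemma Aproj_smul (c : ℂ) (M : Matrix (Fin n1) (Fin n2) ℂ) :
    Aproj A (c • M) = c • Aproj A M := by
  unfold Aproj
  rw [Finset.smul_sum]
  refine Finset.sum_congr rfl fun j _ => ?_
  rw [frobInner_smul_right, smul_smul]

end DC
namespace DC

variable {n1 n2 : ℕ}

open scoped MatrixOrder in
lemma nn_eq (B : Matrix (Fin n1) (Fin n2) ℂ) :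
    nuclearNorm B = (CFC.sqrt (Bᴴ * B)).trace.re := by
  have hG : Matrix.PosSemidef (Bᴴ * B) := Matrix.posSemidef_conjTranspose_mul_self B
  rw [nuclearNorm, CFC.sqrt_eq_real_sqrt _ (Matrix.nonneg_iff_posSemidef.mpr hG),
    cfcₙ_eq_cfc (hf0 := Real.sqrt_zero), hG.1.cfc_eq, IsHermitian.cfc, Unitary.conjStarAlgAut_apply]
  rfl

/-- eigen-data for `Bᴴ * B`, together with the nuclear norm formula. -/
lemma eigendata (B : Matrix (Fin n1) (Fin n2) ℂ) :
    ∃ (W : Matrix (Fin n2) (Fin n2) ℂ) (d : Fin n2 → ℝ),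
      Wᴴ * W = 1 ∧ W * Wᴴ = 1 ∧ (∀ i, 0 ≤ d i) ∧
      Bᴴ * B = W * Matrix.diagonal (fun i => (d i : ℂ)) * Wᴴ ∧
      nuclearNorm B = ∑ i, Real.sqrt (d i) := by
  have hG : Matrix.PosSemidef (Bᴴ * B) := Matrix.posSemidef_conjTranspose_mul_self B
  set W : Matrix (Fin n2) (Fin n2) ℂ := hG.1.eigenvectorUnitary.1 with hW
  have hstar : star W = Wᴴ := rfl
  have h1 : Wᴴ * W = 1 := by
    rw [← hstar]; exact (Matrix.mem_unitaryGroup_iff').mp hG.1.eigenvectorUnitary.2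
  have h2 : W * Wᴴ = 1 := by
    rw [← hstar]; exact (Matrix.mem_unitaryGroup_iff).mp hG.1.eigenvectorUnitary.2
  refine ⟨W, hG.1.eigenvalues, h1, h2, fun i => hG.eigenvalues_nonneg i, ?_, ?_⟩
  · have := hG.1.spectral_theorem
    rw [Unitary.conjStarAlgAut_apply] at this
    rw [← hstar]
    exact this
  · rw [nuclearNorm]
    change (W * Matrix.diagonal (((↑) : ℝ → ℂ) ∘ Real.sqrt ∘ hG.1.eigenvalues) * Wᴴ).trace.re = _
    rw [Matrix.trace_mul_comm, ← Matrix.mul_assoc, h1, Matrix.one_mul,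
      Matrix.trace_diagonal]
    simp [Function.comp]

lemma nuclearNorm_nonneg (B : Matrix (Fin n1) (Fin n2) ℂ) : 0 ≤ nuclearNorm B := by
  obtain ⟨W, d, h1, h2, hd, hspec, hnn⟩ := eigendata B
  rw [hnn]
  exact Finset.sum_nonneg fun i _ => Real.sqrt_nonneg _

lemma frobNorm_le_nuclearNorm (B : Matrix (Fin n1) (Fin n2) ℂ) :
    frobNorm B ≤ nuclearNorm B := by
  obtain ⟨W, d, h1, h2, hd, hspec, hnn⟩ := eigendata B
  have hfs : frobNorm B ^ 2 = ∑ i, d i := by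
    rw [frobNorm_sq, frobInner, hspec, Matrix.trace_mul_comm, ← Matrix.mul_assoc, h1,
      Matrix.one_mul, Matrix.trace_diagonal]
    simp
  have hsum : ∑ i, d i ≤ (∑ i, Real.sqrt (d i)) ^ 2 := by
    have : ∀ i ∈ Finset.univ, d i = Real.sqrt (d i) ^ 2 := fun i _ =>
      (Real.sq_sqrt (hd i)).symm
    rw [Finset.sum_congr rfl this]
    exact Finset.sum_sq_le_sq_sum_of_nonneg fun i _ => Real.sqrt_nonneg _
  have h0 : 0 ≤ frobNorm B := frobNorm_nonneg B
  have h0' : 0 ≤ ∑ i, Real.sqrt (d i) := Finset.sum_nonneg fun i _ => Real.sqrt_nonneg _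
  rw [hnn]
  nlinarith

end DC
namespace DC

variable {n1 n2 : ℕ}

lemma specNorm_nonneg (Z : Matrix (Fin n1) (Fin n2) ℂ) : 0 ≤ specNorm Z := norm_nonneg _

lemma vn_mulVec_le (Z : Matrix (Fin n1) (Fin n2) ℂ) (z : Fin n2 → ℂ) :
    vn (Z *ᵥ z) ≤ specNorm Z * vn z := by
  have h : ev (Z *ᵥ z) = (LinearMap.toContinuousLinearMap (Matrix.toEuclideanLin Z)) (ev z) :=
    rfl
  rw [vn, vn, h]
  exact ContinuousLinearMap.le_opNorm _ _

lemma specNorm_le_bound (Z : Matrix (Fin n1) (Fin n2) ℂ) (c : ℝ) (hc : 0 ≤ c)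
    (h : ∀ z, vn (Z *ᵥ z) ≤ c * vn z) : specNorm Z ≤ c := by
  rw [specNorm]
  refine ContinuousLinearMap.opNorm_le_bound _ hc fun x => ?_
  exact h ((WithLp.equiv 2 _) x)

lemma dot_col_trace (Wm : Matrix (Fin n2) (Fin n2) ℂ) (M : Matrix (Fin n2) (Fin n2) ℂ)
    (i : Fin n2) :
    dotProduct (star fun k => Wm k i) (M *ᵥ fun k => Wm k i)
      = (Wmᴴ * M * Wm) i i := by
  simp only [dotProduct, Matrix.mulVec, Matrix.mul_apply, Matrix.conjTranspose_apply,
    Pi.star_apply, RCLike.star_def, Finset.sum_mul, Finset.mul_sum, dotProduct]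
  rw [Finset.sum_comm]
  refine Finset.sum_congr rfl fun k _ => ?_
  refine Finset.sum_congr rfl fun l _ => ?_
  ring

lemma trace_expansion (Z B : Matrix (Fin n1) (Fin n2) ℂ) (Wm : Matrix (Fin n2) (Fin n2) ℂ)
    (hW : Wm * Wmᴴ = 1) :
    frobInner Z B = ∑ i, dotProduct (star (Z *ᵥ fun k => Wm k i))
      (B *ᵥ fun k => Wm k i) := by
  have h1 : ∀ i : Fin n2, dotProduct (star (Z *ᵥ fun k => Wm k i))
      (B *ᵥ fun k => Wm k i) = (Wmᴴ * (Zᴴ * B) * Wm) i i := by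
    intro i
    rw [dot_mulVec_mulVec, ← dot_col_trace]
  rw [Finset.sum_congr rfl fun i _ => h1 i]
  rw [show ∑ i, (Wmᴴ * (Zᴴ * B) * Wm) i i = (Wmᴴ * (Zᴴ * B) * Wm).trace from rfl]
  rw [Matrix.trace_mul_cycle, ← Matrix.mul_assoc, hW, Matrix.one_mul]
  rfl

/-- duality : `Re⟨Z,B⟩ ≤ ‖Z‖ ‖B‖∗` -/
lemma re_frobInner_le_spec_nuc (Z B : Matrix (Fin n1) (Fin n2) ℂ) :
    (frobInner Z B).re ≤ specNorm Z * nuclearNorm B := by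
  obtain ⟨W, d, h1, h2, hd, hspec, hnn⟩ := eigendata B
  set col : Fin n2 → (Fin n2 → ℂ) := fun i => (fun k => W k i) with hcol
  have hGW : (Bᴴ * B) * W = W * Matrix.diagonal (fun i => (d i : ℂ)) := by
    rw [hspec, Matrix.mul_assoc, h1, Matrix.mul_one]
  have hGcol : ∀ i, (Bᴴ * B) *ᵥ col i = (d i : ℂ) • col i := by
    intro i
    funext k
    have e1 : ((Bᴴ * B) *ᵥ col i) k = ((Bᴴ * B) * W) k i := by
      simp [Matrix.mulVec, Matrix.mul_apply, hcol, dotProduct]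
    rw [e1, hGW, Matrix.mul_diagonal]
    simp [hcol, mul_comm]
  have hcol1 : ∀ i, dotProduct (star (col i)) (col i) = 1 := by
    intro i
    have : dotProduct (star (col i)) (col i) = (Wᴴ * W) i i := by
      simp [dotProduct, Matrix.mul_apply, Matrix.conjTranspose_apply, hcol]
    rw [this, h1, Matrix.one_apply_eq]
  have hvncol : ∀ i, vn (col i) = 1 := by
    intro i
    have h := vn_sq (col i)
    rw [hcol1 i, Complex.one_re] at h
    nlinarith [vn_nonneg (col i)]
  have hBcol : ∀ i, vn (B *ᵥ col i) = Real.sqrt (d i) := by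
    intro i
    have h := vn_mulVec_sq B (col i)
    rw [hGcol i, dotProduct_smul, smul_eq_mul, hcol1 i, mul_one] at h
    rw [Complex.ofReal_re] at h
    have h0 := vn_nonneg (B *ᵥ col i)
    rw [← Real.sqrt_sq h0, h]
  rw [trace_expansion Z B W h2]
  rw [Complex.re_sum]
  calc ∑ i, (dotProduct (star (Z *ᵥ col i)) (B *ᵥ col i)).re
      ≤ ∑ i, specNorm Z * Real.sqrt (d i) := by
        refine Finset.sum_le_sum fun i _ => ?_
        refine (re_dot_le _ _).trans ?_
        rw [← hBcol i]
        refine mul_le_mul_of_nonneg_right ?_ (vn_nonneg _)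
        have := vn_mulVec_le Z (col i)
        rwa [hvncol i, mul_one] at this
    _ = specNorm Z * nuclearNorm B := by rw [← Finset.mul_sum, hnn]

end DC
namespace DC

variable {n1 n2 : ℕ}

lemma vn_sq' {k : ℕ} (v : Fin k → ℂ) : vn v ^ 2 = ∑ i, ‖v i‖ ^ 2 := by
  rw [vn_sq, dotProduct, Complex.re_sum]
  refine Finset.sum_congr rfl fun i _ => ?_
  simp only [Pi.star_apply, RCLike.star_def]
  rw [mul_comm, Complex.mul_conj, Complex.normSq_eq_norm_sq]
  norm_cast

/-- existence of the "sign matrix" of `B`. -/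
lemma sign_matrix (B : Matrix (Fin n1) (Fin n2) ℂ) :
    ∃ Y : Matrix (Fin n1) (Fin n2) ℂ,
      (frobInner Y B).re = nuclearNorm B ∧
      (∀ z : Fin n2 → ℂ, vn (Y *ᵥ z) ≤ vn z) ∧
      (∀ (r' : ℕ) (U' : Matrix (Fin n1) (Fin r') ℂ), U'ᴴ * B = 0 → U'ᴴ * Y = 0) ∧
      (∀ (r' : ℕ) (V' : Matrix (Fin n2) (Fin r') ℂ), B * V' = 0 → Y * V' = 0) := by
  obtain ⟨W, d, h1, h2, hd, hspec, hnn⟩ := eigendata B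
  have hWW : ∀ {c : ℕ} (X : Matrix (Fin n2) (Fin c) ℂ), Wᴴ * (W * X) = X := fun X => by
    rw [← Matrix.mul_assoc, h1, Matrix.one_mul]
  set gr : Fin n2 → ℝ := fun i => if d i = 0 then 0 else (Real.sqrt (d i))⁻¹ with hgr
  have hgrd : ∀ i, gr i * d i = Real.sqrt (d i) := by
    intro i
    by_cases h : d i = 0
    · simp [hgr, h]
    · have hsq : Real.sqrt (d i) * Real.sqrt (d i) = d i := Real.mul_self_sqrt (hd i)
      have hs0 : Real.sqrt (d i) ≠ 0 := by
        intro hc; rw [← hsq, hc, mul_zero] at h; exact h rfl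
      rw [hgr]
      simp only [h, if_false]
      rw [← hsq]
      field_simp
      rw [Real.sqrt_sq (Real.sqrt_nonneg _)]
  set p : Fin n2 → ℝ := fun i => gr i * gr i * d i with hp
  have hp01 : ∀ i, p i = 0 ∨ p i = 1 := by
    intro i
    by_cases h : d i = 0
    · left; simp [hp, hgr, h]
    · right
      have hsq : Real.sqrt (d i) * Real.sqrt (d i) = d i := Real.mul_self_sqrt (hd i)
      have hs0 : Real.sqrt (d i) ≠ 0 := by
        intro hc; rw [← hsq, hc, mul_zero] at h; exact h rfl
      rw [hp, hgr]
      simp only [h, if_false]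
      rw [← hsq]
      field_simp
      rw [Real.sqrt_sq (Real.sqrt_nonneg _)]
  have hpp : ∀ i, p i * p i = p i := by
    intro i; rcases hp01 i with h | h <;> simp [h]
  have hp0 : ∀ i, 0 ≤ p i := by
    intro i; rcases hp01 i with h | h <;> simp [h]
  have hp1 : ∀ i, p i ≤ 1 := by
    intro i; rcases hp01 i with h | h <;> simp [h]
  set Dg : Matrix (Fin n2) (Fin n2) ℂ := Matrix.diagonal (fun i => (gr i : ℂ)) with hDg
  set Dd : Matrix (Fin n2) (Fin n2) ℂ := Matrix.diagonal (fun i => (d i : ℂ)) with hDd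
  set N : Matrix (Fin n2) (Fin n2) ℂ := W * Dg * Wᴴ with hN
  have hNH : Nᴴ = N := by
    rw [hN, hDg, Matrix.conjTranspose_mul, Matrix.conjTranspose_mul,
      Matrix.conjTranspose_conjTranspose, Matrix.diagonal_conjTranspose,
      show (star fun i => ((gr i : ℝ) : ℂ)) = fun i => ((gr i : ℝ) : ℂ) from
        funext fun i => by simp [Complex.conj_ofReal],
      ← Matrix.mul_assoc]
  refine ⟨B * N, ?_, ?_, ?_, ?_⟩
  · -- ⟨Y, B⟩ = ‖B‖∗
    have key : frobInner (B * N) B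
        = (Matrix.diagonal (fun i => (gr i : ℂ) * (d i : ℂ))).trace := by
      rw [frobInner, Matrix.conjTranspose_mul, Matrix.mul_assoc, hNH]
      rw [hspec, hN]
      rw [show W * Dg * Wᴴ * (W * Dd * Wᴴ) = W * (Dg * Dd) * Wᴴ by
        rw [Matrix.mul_assoc (W * Dg) Wᴴ (W * Dd * Wᴴ), Matrix.mul_assoc W Dd Wᴴ, hWW,
          ← Matrix.mul_assoc (W * Dg) Dd Wᴴ, Matrix.mul_assoc W Dg Dd]]
      rw [Matrix.trace_mul_comm, ← Matrix.mul_assoc, h1, Matrix.one_mul]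
      rw [hDg, hDd, Matrix.diagonal_mul_diagonal]
    rw [key, Matrix.trace_diagonal, hnn, Complex.re_sum]
    refine Finset.sum_congr rfl fun i _ => ?_
    rw [show ((gr i : ℂ) * (d i : ℂ)).re = gr i * d i by norm_cast]
    exact hgrd i
  · -- contraction
    intro z
    have hYY : (B * N)ᴴ * (B * N) = W * Matrix.diagonal (fun i => (p i : ℂ)) * Wᴴ := by
      rw [Matrix.conjTranspose_mul]
      rw [show Nᴴ * Bᴴ * (B * N) = Nᴴ * (Bᴴ * B) * N by
        rw [Matrix.mul_assoc, Matrix.mul_assoc, Matrix.mul_assoc], hNH, hspec, hN]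
      rw [show W * Dg * Wᴴ * (W * Dd * Wᴴ) * (W * Dg * Wᴴ)
          = W * (Dg * Dd * Dg) * Wᴴ by
        rw [Matrix.mul_assoc (W * Dg) Wᴴ (W * Dd * Wᴴ), Matrix.mul_assoc W Dd Wᴴ, hWW,
          ← Matrix.mul_assoc (W * Dg) Dd Wᴴ,
          Matrix.mul_assoc (W * Dg * Dd) Wᴴ (W * Dg * Wᴴ), Matrix.mul_assoc W Dg Wᴴ, hWW,
          ← Matrix.mul_assoc (W * Dg * Dd) Dg Wᴴ,
          Matrix.mul_assoc W Dg Dd, Matrix.mul_assoc W (Dg * Dd) Dg]]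
      have hdiag : Dg * Dd * Dg = Matrix.diagonal (fun i => (p i : ℂ)) := by
        ext i j
        rw [hDg, hDd]
        by_cases h : i = j
        · subst h
          rw [Matrix.mul_diagonal, Matrix.diagonal_mul, Matrix.diagonal_apply_eq,
            Matrix.diagonal_apply_eq]
          simp only [hp]
          push_cast
          ring
        · rw [Matrix.mul_diagonal, Matrix.diagonal_mul, Matrix.diagonal_apply_ne _ h,
            Matrix.diagonal_apply_ne _ h]
          simp
      rw [hdiag]
    have hCC : (Matrix.diagonal (fun i => (p i : ℂ)) * Wᴴ)ᴴ
          * (Matrix.diagonal (fun i => (p i : ℂ)) * Wᴴ)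
        = W * Matrix.diagonal (fun i => (p i : ℂ)) * Wᴴ := by
      rw [Matrix.conjTranspose_mul, Matrix.conjTranspose_conjTranspose,
        Matrix.diagonal_conjTranspose,
        show (star fun i => ((p i : ℝ) : ℂ)) = fun i => ((p i : ℝ) : ℂ) from
          funext fun i => by simp [Complex.conj_ofReal]]
      rw [Matrix.mul_assoc W _ _,
        ← Matrix.mul_assoc (Matrix.diagonal fun i => ((p i : ℝ) : ℂ))
          (Matrix.diagonal fun i => ((p i : ℝ) : ℂ)) Wᴴ,
        Matrix.diagonal_mul_diagonal,
        show (fun i => ((p i : ℝ) : ℂ) * ((p i : ℝ) : ℂ)) = fun i => ((p i : ℝ) : ℂ) from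
          funext fun i => by rw [← Complex.ofReal_mul, hpp i],
        ← Matrix.mul_assoc]
    have e1 : vn ((B * N) *ᵥ z) ^ 2
        = vn ((Matrix.diagonal (fun i => (p i : ℂ)) * Wᴴ) *ᵥ z) ^ 2 := by
      rw [vn_mulVec_sq, vn_mulVec_sq, hYY, hCC]
    have hu : vn (Wᴴ *ᵥ z) ^ 2 = vn z ^ 2 := by
      rw [vn_mulVec_sq, Matrix.conjTranspose_conjTranspose, h2, Matrix.one_mulVec, vn_sq]
    have e2 : vn ((Matrix.diagonal (fun i => (p i : ℂ)) * Wᴴ) *ᵥ z) ^ 2 ≤ vn z ^ 2 := by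
      rw [← Matrix.mulVec_mulVec, ← hu, vn_sq', vn_sq']
      refine Finset.sum_le_sum fun i _ => ?_
      rw [Matrix.mulVec_diagonal, norm_mul, mul_pow]
      have ha : ‖((p i : ℝ) : ℂ)‖ ^ 2 ≤ 1 := by
        have h1' : ‖((p i : ℝ) : ℂ)‖ = p i := by
          rw [Complex.norm_real, Real.norm_eq_abs, abs_of_nonneg (hp0 i)]
        rw [h1']
        nlinarith [hp0 i, hp1 i]
      calc ‖((p i : ℝ) : ℂ)‖ ^ 2 * ‖(Wᴴ *ᵥ z) i‖ ^ 2
          ≤ 1 * ‖(Wᴴ *ᵥ z) i‖ ^ 2 := mul_le_mul_of_nonneg_right ha (sq_nonneg _)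
        _ = ‖(Wᴴ *ᵥ z) i‖ ^ 2 := one_mul _
    have := e1.trans_le e2
    nlinarith [vn_nonneg ((B * N) *ᵥ z), vn_nonneg z]
  · -- Uᴴ kill
    intro r' U' hU'
    rw [← Matrix.mul_assoc, hU', Matrix.zero_mul]
  · -- V kill
    intro r' V' hV'
    have hGV : (Bᴴ * B) * V' = 0 := by rw [Matrix.mul_assoc, hV', Matrix.mul_zero]
    have hDdV : Dd * (Wᴴ * V') = 0 := by
      have h0 : Wᴴ * ((Bᴴ * B) * V') = 0 := by rw [hGV, Matrix.mul_zero]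
      rw [← h0, hspec]
      rw [show Wᴴ * (W * Dd * Wᴴ * V') = Dd * (Wᴴ * V') by
        rw [Matrix.mul_assoc (W * Dd) Wᴴ V', Matrix.mul_assoc W Dd (Wᴴ * V'), hWW]]
    have hDgV : Dg * (Wᴴ * V') = 0 := by
      ext i j
      have hij := congrFun (congrFun hDdV i) j
      rw [hDd, Matrix.diagonal_mul] at hij
      rw [hDg, Matrix.diagonal_mul]
      simp only [Matrix.zero_apply] at hij ⊢
      by_cases h : d i = 0
      · simp [hgr, h]
      · have hz : (Wᴴ * V') i j = 0 := by
          have hne : ((d i : ℝ) : ℂ) ≠ 0 := Complex.ofReal_ne_zero.mpr h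
          exact (mul_eq_zero.mp hij).resolve_left hne
        rw [hz, mul_zero]
    rw [hN, Matrix.mul_assoc B (W * Dg * Wᴴ) V',
      Matrix.mul_assoc (W * Dg) Wᴴ V', Matrix.mul_assoc W Dg (Wᴴ * V'), hDgV,
      Matrix.mul_zero, Matrix.mul_zero]

end DC
namespace DC

lemma specZ {n1 n2 r : ℕ} (U : Matrix (Fin n1) (Fin r) ℂ) (V : Matrix (Fin n2) (Fin r) ℂ)
    (hU : Uᴴ * U = 1) (hV : Vᴴ * V = 1) (Y : Matrix (Fin n1) (Fin n2) ℂ)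
    (hUY : Uᴴ * Y = 0) (hYV : Y * V = 0) (hc : ∀ z, vn (Y *ᵥ z) ≤ vn z) :
    specNorm (U * Vᴴ + Y) ≤ 1 := by
  refine specNorm_le_bound _ 1 zero_le_one fun z => ?_
  have hYU : Yᴴ * U = 0 := by
    have h := congrArg Matrix.conjTranspose hUY
    rwa [Matrix.conjTranspose_mul, Matrix.conjTranspose_conjTranspose,
      Matrix.conjTranspose_zero] at h
  have hm : (U * Vᴴ + Y)ᴴ * (U * Vᴴ + Y) = (U * Vᴴ)ᴴ * (U * Vᴴ) + Yᴴ * Y := by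
    rw [Matrix.conjTranspose_add, Matrix.add_mul, Matrix.mul_add, Matrix.mul_add]
    have e1 : (U * Vᴴ)ᴴ * Y = 0 := by
      rw [Matrix.conjTranspose_mul, Matrix.conjTranspose_conjTranspose,
        Matrix.mul_assoc, hUY, Matrix.mul_zero]
    have e2 : Yᴴ * (U * Vᴴ) = 0 := by
      rw [← Matrix.mul_assoc, hYU, Matrix.zero_mul]
    rw [e1, e2, add_zero, zero_add]
  have s1 : vn ((U * Vᴴ + Y) *ᵥ z) ^ 2 = vn ((U * Vᴴ) *ᵥ z) ^ 2 + vn (Y *ᵥ z) ^ 2 := by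
    rw [vn_mulVec_sq, hm, Matrix.add_mulVec, dotProduct_add, Complex.add_re,
      ← vn_mulVec_sq, ← vn_mulVec_sq]
  have s2 : vn ((U * Vᴴ) *ᵥ z) ^ 2 = vn (Vᴴ *ᵥ z) ^ 2 := by
    rw [vn_mulVec_sq, vn_mulVec_sq]
    have e : (U * Vᴴ)ᴴ * (U * Vᴴ) = Vᴴᴴ * Vᴴ := by
      rw [Matrix.conjTranspose_mul, Matrix.conjTranspose_conjTranspose,
        Matrix.mul_assoc V Uᴴ (U * Vᴴ), ← Matrix.mul_assoc Uᴴ U Vᴴ, hU, Matrix.one_mul]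
    rw [e]
  set P : Matrix (Fin n2) (Fin n2) ℂ := V * Vᴴ with hP
  have hPH : Pᴴ = P := by
    rw [hP, Matrix.conjTranspose_mul, Matrix.conjTranspose_conjTranspose]
  have hPP : P * P = P := by
    rw [hP, Matrix.mul_assoc V Vᴴ (V * Vᴴ), ← Matrix.mul_assoc Vᴴ V Vᴴ, hV, Matrix.one_mul]
  have s3 : Y *ᵥ z = Y *ᵥ (z - P *ᵥ z) := by
    rw [Matrix.mulVec_sub, Matrix.mulVec_mulVec, hP, ← Matrix.mul_assoc, hYV,
      Matrix.zero_mul, Matrix.zero_mulVec, sub_zero]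
  have s4 : vn (z - P *ᵥ z) ^ 2 = vn z ^ 2 - vn (Vᴴ *ᵥ z) ^ 2 := by
    have e0 : z - P *ᵥ z = (1 - P) *ᵥ z := by
      rw [Matrix.sub_mulVec, Matrix.one_mulVec]
    have e1 : (1 - P)ᴴ * (1 - P) = 1 - P := by
      rw [Matrix.conjTranspose_sub, Matrix.conjTranspose_one, hPH, Matrix.sub_mul,
        Matrix.one_mul, Matrix.mul_sub, hPP, Matrix.mul_one]
      abel
    have e2 : (dotProduct (star z) (P *ᵥ z)).re = vn (Vᴴ *ᵥ z) ^ 2 := by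
      rw [vn_mulVec_sq, Matrix.conjTranspose_conjTranspose]
    rw [e0, vn_mulVec_sq, e1, Matrix.sub_mulVec, Matrix.one_mulVec,
      dotProduct_sub, Complex.sub_re, e2, ← vn_sq]
  have hle : vn (Y *ᵥ z) ^ 2 ≤ vn (z - P *ᵥ z) ^ 2 := by
    rw [s3]
    exact pow_le_pow_left₀ (vn_nonneg _) (hc _) 2
  refine vn_le_of_sq_le zero_le_one ?_
  rw [one_pow, one_mul, s1, s2]
  have := s4
  nlinarith [hle]

end DC
namespace DC

lemma cancel_left {a b k : ℕ} {C : Matrix (Fin a) (Fin k) ℂ} (h : Cᴴ * C = 1)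
    (X : Matrix (Fin k) (Fin b) ℂ) : Cᴴ * (C * X) = X := by
  rw [← Matrix.mul_assoc, h, Matrix.one_mul]

variable {n1 n2 r : ℕ} (U : Matrix (Fin n1) (Fin r) ℂ) (V : Matrix (Fin n2) (Fin r) ℂ)

lemma trace_V_D_Vh (hV : Vᴴ * V = 1) (f : Fin r → ℂ) :
    (V * (Matrix.diagonal f * Vᴴ)).trace = ∑ i, f i := by
  rw [← Matrix.mul_assoc, Matrix.trace_mul_comm, ← Matrix.mul_assoc, hV, Matrix.one_mul,
    Matrix.trace_diagonal]

lemma diagC_herm (σ : Fin r → ℝ) :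
    (Matrix.diagonal fun i => ((σ i : ℝ) : ℂ))ᴴ = Matrix.diagonal fun i => ((σ i : ℝ) : ℂ) := by
  rw [Matrix.diagonal_conjTranspose,
    show (star fun i => ((σ i : ℝ) : ℂ)) = fun i => ((σ i : ℝ) : ℂ) from
      funext fun i => by simp [Complex.conj_ofReal]]

open scoped MatrixOrder in
lemma nuclearNorm_svd (hU : Uᴴ * U = 1) (hV : Vᴴ * V = 1) (σ : Fin r → ℝ)
    (hσ : ∀ i, 0 ≤ σ i) :
    nuclearNorm (U * Matrix.diagonal (fun i => (σ i : ℂ)) * Vᴴ) = ∑ i, σ i := by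
  set X : Matrix (Fin n1) (Fin n2) ℂ := U * Matrix.diagonal (fun i => (σ i : ℂ)) * Vᴴ with hX
  set S : Matrix (Fin n2) (Fin n2) ℂ
    := V * (Matrix.diagonal (fun i => (σ i : ℂ)) * Vᴴ) with hS
  have hSps : Matrix.PosSemidef S := by
    have key : S = (Matrix.diagonal (fun i => ((Real.sqrt (σ i) : ℝ) : ℂ)) * Vᴴ)ᴴ
        * (Matrix.diagonal (fun i => ((Real.sqrt (σ i) : ℝ) : ℂ)) * Vᴴ) := by
      rw [Matrix.conjTranspose_mul, Matrix.conjTranspose_conjTranspose, diagC_herm,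
        Matrix.mul_assoc, ← Matrix.mul_assoc (Matrix.diagonal _) (Matrix.diagonal _) Vᴴ,
        Matrix.diagonal_mul_diagonal,
        show (fun i => ((Real.sqrt (σ i) : ℝ) : ℂ) * ((Real.sqrt (σ i) : ℝ) : ℂ))
            = fun i => ((σ i : ℝ) : ℂ) from funext fun i => by
          rw [← Complex.ofReal_mul, Real.mul_self_sqrt (hσ i)], hS]
    rw [key]
    exact Matrix.posSemidef_conjTranspose_mul_self _
  have hR : Xᴴ * X
      = V * (Matrix.diagonal (fun i => (σ i : ℂ) * (σ i : ℂ)) * Vᴴ) := by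
    simp only [hX, Matrix.conjTranspose_mul, Matrix.conjTranspose_conjTranspose, diagC_herm,
      Matrix.mul_assoc, cancel_left hU]
    rw [← Matrix.mul_assoc (Matrix.diagonal _) (Matrix.diagonal _) Vᴴ,
      Matrix.diagonal_mul_diagonal]
  have hL : S ^ 2
      = V * (Matrix.diagonal (fun i => (σ i : ℂ) * (σ i : ℂ)) * Vᴴ) := by
    rw [pow_two]
    simp only [hS, Matrix.mul_assoc, cancel_left hV]
    rw [← Matrix.mul_assoc (Matrix.diagonal _) (Matrix.diagonal _) Vᴴ,
      Matrix.diagonal_mul_diagonal]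
  have hkey : S = CFC.sqrt (Xᴴ * X) :=
    ((CFC.sqrt_eq_iff _ _ (Matrix.nonneg_iff_posSemidef.mpr
      (Matrix.posSemidef_conjTranspose_mul_self X)) (Matrix.nonneg_iff_posSemidef.mpr hSps)).mpr
      ((pow_two S).symm.trans (hL.trans hR.symm))).symm
  rw [nn_eq, ← hkey, hS, trace_V_D_Vh V hV]
  rw [Complex.re_sum]
  exact Finset.sum_congr rfl fun i _ => Complex.ofReal_re _

lemma frobInner_UV_X (hU : Uᴴ * U = 1) (hV : Vᴴ * V = 1) (σ : Fin r → ℝ) :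
    frobInner (U * Vᴴ) (U * Matrix.diagonal (fun i => (σ i : ℂ)) * Vᴴ) = ∑ i, (σ i : ℂ) := by
  rw [frobInner]
  rw [show (U * Vᴴ)ᴴ * (U * Matrix.diagonal (fun i => (σ i : ℂ)) * Vᴴ)
      = V * (Matrix.diagonal (fun i => (σ i : ℂ)) * Vᴴ) by
    simp only [Matrix.conjTranspose_mul, Matrix.conjTranspose_conjTranspose,
      Matrix.mul_assoc, cancel_left hU]]
  rw [trace_V_D_Vh V hV]

lemma frobInner_Y_X_zero (Y : Matrix (Fin n1) (Fin n2) ℂ) (hUY : Uᴴ * Y = 0)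
    (D : Matrix (Fin r) (Fin r) ℂ) :
    frobInner Y (U * D * Vᴴ) = 0 := by
  have hYU : Yᴴ * U = 0 := by
    have h := congrArg Matrix.conjTranspose hUY
    rwa [Matrix.conjTranspose_mul, Matrix.conjTranspose_conjTranspose,
      Matrix.conjTranspose_zero] at h
  rw [frobInner, Matrix.mul_assoc U D Vᴴ, ← Matrix.mul_assoc Yᴴ U (D * Vᴴ), hYU,
    Matrix.zero_mul, Matrix.trace_zero]

lemma frobInner_zero_left (M : Matrix (Fin n1) (Fin n2) ℂ) : frobInner 0 M = 0 := by
  simp [frobInner]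

end DC
namespace DC

lemma frobNorm_rsmul {a b : ℕ} (c : ℝ) (M : Matrix (Fin a) (Fin b) ℂ) :
    frobNorm (c • M) = |c| * frobNorm M := by
  have h : c • M = ((c : ℂ)) • M := by
    ext i j
    simp [Complex.real_smul]
  rw [h, frobNorm_smul, Complex.norm_real, Real.norm_eq_abs]

lemma opNormFro_apply_le {a b : ℕ}
    (F : Matrix (Fin a) (Fin b) ℂ → Matrix (Fin a) (Fin b) ℂ)
    (hsc : ∀ (c : ℝ) (M : Matrix (Fin a) (Fin b) ℂ), F (((c : ℝ) : ℂ) • M) = ((c : ℝ) : ℂ) • F M)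
    (C : ℝ) (hC : ∀ M, frobNorm M ≤ 1 → frobNorm (F M) ≤ C)
    (h : opNormFro F ≤ 1 / 2) (M : Matrix (Fin a) (Fin b) ℂ) :
    frobNorm (F M) ≤ 1 / 2 * frobNorm M := by
  have hbdd : BddAbove {c : ℝ | ∃ M, frobNorm M ≤ 1 ∧ c = frobNorm (F M)} := by
    refine ⟨C, fun c hc => ?_⟩
    obtain ⟨N, hN1, hN2⟩ := hc
    rw [hN2]
    exact hC N hN1
  by_cases h0 : frobNorm M = 0
  · have hM0 : M = 0 := frobNorm_eq_zero_iff.mp h0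
    have hF0 : F 0 = 0 := by
      have := hsc 0 0
      simpa using this
    rw [hM0, hF0, frobNorm_zero]
    norm_num
  · have hpos : 0 < frobNorm M := lt_of_le_of_ne (frobNorm_nonneg M) (Ne.symm h0)
    set t : ℝ := frobNorm M with ht
    have hM' : frobNorm ((((t⁻¹ : ℝ) : ℂ)) • M) = 1 := by
      rw [frobNorm_smul, Complex.norm_real, Real.norm_eq_abs,
        abs_of_pos (inv_pos.mpr hpos)]
      field_simp
      exact ht.symm
    have hmem : frobNorm (F ((((t⁻¹ : ℝ) : ℂ)) • M))
        ∈ {c : ℝ | ∃ M, frobNorm M ≤ 1 ∧ c = frobNorm (F M)} :=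
      ⟨(((t⁻¹ : ℝ) : ℂ)) • M, le_of_eq hM', rfl⟩
    have hle : frobNorm (F ((((t⁻¹ : ℝ) : ℂ)) • M)) ≤ 1 / 2 :=
      le_trans (le_csSup hbdd hmem) h
    rw [hsc t⁻¹ M, frobNorm_smul, Complex.norm_real, Real.norm_eq_abs,
      abs_of_pos (inv_pos.mpr hpos)] at hle
    calc frobNorm (F M) = t * (t⁻¹ * frobNorm (F M)) := by field_simp
      _ ≤ t * (1 / 2) := by
          exact mul_le_mul_of_nonneg_left hle (le_of_lt hpos)
      _ = 1 / 2 * frobNorm M := by rw [ht]; ring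

end DC
namespace DC

lemma frobInner_neg_left {a b : ℕ} (M N : Matrix (Fin a) (Fin b) ℂ) :
    frobInner (-M) N = -frobInner M N := by
  simp [frobInner, Matrix.conjTranspose_neg, Matrix.neg_mul]

lemma PT_neg {n1 n2 r : ℕ} (U : Matrix (Fin n1) (Fin r) ℂ) (V : Matrix (Fin n2) (Fin r) ℂ)
    (M : Matrix (Fin n1) (Fin n2) ℂ) : PT U V (-M) = -PT U V M := by
  have := PT_sub U V 0 M
  simpa [PT_zero] using this

end DC

open DC in
set_option maxHeartbeats 1600000 in
theorem dc_aux
    (n1 n2 n r m : ℕ) (hm : 0 < m)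
    (A : Fin n → Matrix (Fin n1) (Fin n2) ℂ)
    (horth : ∀ k l, frobInner (A k) (A l) = if k = l then 1 else 0)
    (hLinj : Function.Injective fun v : Fin n → ℂ => ∑ k, v k • A k)
    (x : Fin n → ℂ)
    (U : Matrix (Fin n1) (Fin r) ℂ) (V : Matrix (Fin n2) (Fin r) ℂ)
    (hU : Uᴴ * U = 1) (hV : Vᴴ * V = 1)
    (σ : Fin r → ℝ) (hσ : ∀ i, 0 < σ i)
    (hsvd : (∑ k, x k • A k) = U * Matrix.diagonal (fun i => (σ i : ℂ)) * Vᴴ)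
    (ω : Fin m → Fin n)
    (hiso : opNormFro (fun M : Matrix (Fin n1) (Fin n2) ℂ =>
        ((n : ℝ) / (m : ℝ)) • PT U V (AsampMulti A ω (PT U V M)) -
          PT U V (Aproj A (PT U V M))) ≤ 1 / 2)
    (W : Matrix (Fin n1) (Fin n2) ℂ)
    (hW1 : Aproj A W - AsampSet A ω W = 0)
    (hW2 : frobNorm (PT U V (W - U * Vᴴ)) ≤ 1 / (7 * (n : ℝ)))
    (hW3 : specNorm (PTperp U V W) ≤ 1 / 2) :
    ∀ g : Fin n → ℂ, (∀ j, g (ω j) = x (ω j)) → g ≠ x →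
      nuclearNorm (∑ k, x k • A k) < nuclearNorm (∑ k, g k • A k) := by
  intro g hfeas hne
  classical
  -- small n case : all entries observed, so g = x, contradiction
  rcases Nat.lt_or_ge n 2 with hlt | hn2
  · exfalso
    apply hne
    funext k
    rcases (by omega : n = 0 ∨ n = 1) with h0 | h1
    · exact absurd k.pos (by omega)
    · subst h1
      have hk : k = ω ⟨0, hm⟩ := Subsingleton.elim _ _
      rw [hk]
      exact hfeas _
  have hn2' : (2 : ℝ) ≤ (n : ℝ) := by exact_mod_cast hn2
  have hm0 : (0 : ℝ) < (m : ℝ) := by exact_mod_cast hm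
  have hn0 : (0 : ℝ) < (n : ℝ) := by linarith
  -- the difference
  set h : Fin n → ℂ := fun k => g k - x k with hh
  set H : Matrix (Fin n1) (Fin n2) ℂ := ∑ k, h k • A k with hHdef
  have hgx : (∑ k, g k • A k) = (∑ k, x k • A k) + H := by
    rw [hHdef, ← Finset.sum_add_distrib]
    refine Finset.sum_congr rfl fun k _ => ?_
    rw [← add_smul, show x k + h k = g k by rw [hh]; ring]
  have hHne : H ≠ 0 := by
    intro h0
    apply hne
    have hz : h = 0 := by
      apply hLinj
      show (∑ k, h k • A k) = ∑ k, (0 : Fin n → ℂ) k • A k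
      rw [← hHdef, h0]
      simp
    funext k
    have := congrFun hz k
    simp only [hh, Pi.zero_apply] at this
    linear_combination this
  have hhω : ∀ j, h (ω j) = 0 := fun j => by
    simp only [hh]
    rw [hfeas j, sub_self]
  have hAΩH : AsampMulti A ω H = 0 := AsampMulti_lift_eq_zero A ω h hhω horth
  have hAH : Aproj A H = H := Aproj_lift A horth h
  set HT : Matrix (Fin n1) (Fin n2) ℂ := PT U V H with hHT
  set HP : Matrix (Fin n1) (Fin n2) ℂ := PTperp U V H with hHP
  have hHsplit : H = HT + HP := by rw [hHT, hHP, PTperp]; abel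
  have hHTeq : HT = H - HP := by rw [hHP, PTperp, sub_sub_cancel]
  have hPTHT : PT U V HT = HT := by rw [hHT]; exact PT_idem U V hU hV H
  -- the isometry, extracted
  set F : Matrix (Fin n1) (Fin n2) ℂ → Matrix (Fin n1) (Fin n2) ℂ := fun M =>
    ((n : ℝ) / (m : ℝ)) • PT U V (AsampMulti A ω (PT U V M)) -
      PT U V (Aproj A (PT U V M)) with hF
  have hFsc : ∀ (c : ℝ) (M : Matrix (Fin n1) (Fin n2) ℂ),
      F (((c : ℝ) : ℂ) • M) = ((c : ℝ) : ℂ) • F M := by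
    intro c M
    simp only [hF, PT_smul, AsampMulti_smul, Aproj_smul, smul_sub]
    rw [smul_comm ((c : ℝ) : ℂ) ((n : ℝ) / (m : ℝ))]
  have hFC : ∀ M, frobNorm M ≤ 1 → frobNorm (F M) ≤ (n : ℝ) / (m : ℝ) * (m : ℝ) + 1 := by
    intro M hM
    have hPTM : frobNorm (PT U V M) ≤ 1 := (frobNorm_PT_le U V hU hV M).trans hM
    have h1 : frobNorm (((n : ℝ) / (m : ℝ)) • PT U V (AsampMulti A ω (PT U V M)))
        ≤ (n : ℝ) / (m : ℝ) * (m : ℝ) := by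
      rw [frobNorm_rsmul, abs_of_nonneg (by positivity)]
      refine mul_le_mul_of_nonneg_left ?_ (by positivity)
      refine (frobNorm_PT_le U V hU hV _).trans ?_
      refine (frobNorm_AsampMulti_le A horth ω _).trans ?_
      calc (m : ℝ) * frobNorm (PT U V M) ≤ (m : ℝ) * 1 :=
            mul_le_mul_of_nonneg_left hPTM (le_of_lt hm0)
        _ = (m : ℝ) := mul_one _
    have h2 : frobNorm (PT U V (Aproj A (PT U V M))) ≤ 1 := by
      refine (frobNorm_PT_le U V hU hV _).trans ?_
      exact (frobNorm_Aproj_le A horth _).trans hPTM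
    refine (frobNorm_sub_le _ _).trans ?_
    linarith
  have hisoF : ∀ M, frobNorm (F M) ≤ 1 / 2 * frobNorm M :=
    opNormFro_apply_le F hFsc ((n : ℝ) / (m : ℝ) * (m : ℝ) + 1) hFC hiso
  -- Step A : ‖HT‖ ≤ 2(n+1) ‖HP‖
  have hAsHT : AsampMulti A ω HT = -AsampMulti A ω HP := by
    rw [hHTeq, AsampMulti_sub, hAΩH, zero_sub]
  have hAprHT : Aproj A HT = H - Aproj A HP := by
    rw [hHTeq, Aproj_sub, hAH]
  have hFHT : F HT = -(((n : ℝ) / (m : ℝ)) • PT U V (AsampMulti A ω HP)) - HT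
      + PT U V (Aproj A HP) := by
    simp only [hF]
    rw [hPTHT, hAsHT, hAprHT, PT_neg, PT_sub, ← hHT, smul_neg]
    abel
  have hHTexpr : HT = PT U V (Aproj A HP)
      - ((n : ℝ) / (m : ℝ)) • PT U V (AsampMulti A ω HP) - F HT := by
    rw [hFHT]; abel
  have hb1 : frobNorm (PT U V (Aproj A HP)) ≤ frobNorm HP :=
    (frobNorm_PT_le U V hU hV _).trans (frobNorm_Aproj_le A horth _)
  have hb2 : frobNorm (((n : ℝ) / (m : ℝ)) • PT U V (AsampMulti A ω HP))
      ≤ (n : ℝ) * frobNorm HP := by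
    rw [frobNorm_rsmul, abs_of_nonneg (by positivity)]
    have t2 : frobNorm (PT U V (AsampMulti A ω HP)) ≤ (m : ℝ) * frobNorm HP :=
      (frobNorm_PT_le U V hU hV _).trans (frobNorm_AsampMulti_le A horth ω _)
    calc (n : ℝ) / (m : ℝ) * frobNorm (PT U V (AsampMulti A ω HP))
        ≤ (n : ℝ) / (m : ℝ) * ((m : ℝ) * frobNorm HP) :=
          mul_le_mul_of_nonneg_left t2 (by positivity)
      _ = (n : ℝ) * frobNorm HP := by field_simp
  have hstepA : frobNorm HT ≤ 2 * ((n : ℝ) + 1) * frobNorm HP := by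
    have t0 : frobNorm HT ≤ frobNorm (PT U V (Aproj A HP)
        - ((n : ℝ) / (m : ℝ)) • PT U V (AsampMulti A ω HP)) + frobNorm (F HT) := by
      calc frobNorm HT
          = frobNorm (PT U V (Aproj A HP)
            - ((n : ℝ) / (m : ℝ)) • PT U V (AsampMulti A ω HP) - F HT) := by rw [← hHTexpr]
        _ ≤ _ := frobNorm_sub_le _ _
    have t1 := frobNorm_sub_le (PT U V (Aproj A HP))
      (((n : ℝ) / (m : ℝ)) • PT U V (AsampMulti A ω HP))
    have t2 := hisoF HT
    linarith
  -- ‖HP‖ > 0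
  have hbpos : 0 < frobNorm HP := by
    rcases lt_or_eq_of_le (frobNorm_nonneg HP) with hp | hp
    · exact hp
    · exfalso
      have hHP0 : HP = 0 := frobNorm_eq_zero_iff.mp hp.symm
      have hHT0 : HT = 0 := by
        have := hstepA
        rw [← hp] at this
        have h0 : frobNorm HT ≤ 0 := by linarith
        exact frobNorm_eq_zero_iff.mp (le_antisymm h0 (frobNorm_nonneg HT))
      exact hHne (by rw [hHsplit, hHP0, hHT0, add_zero])
  have hbn : frobNorm HP ≤ nuclearNorm HP := frobNorm_le_nuclearNorm HP
  have hbnpos : 0 < nuclearNorm HP := lt_of_lt_of_le hbpos hbn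
  -- the sign matrix of HP
  obtain ⟨Y, hY1, hY2, hY3, hY4⟩ := sign_matrix HP
  have hUHP : Uᴴ * HP = 0 := by rw [hHP]; exact conjTranspose_U_PTperp U V hU H
  have hHPV : HP * V = 0 := by rw [hHP]; exact PTperp_V U V hV H
  have hUY : Uᴴ * Y = 0 := hY3 r U hUHP
  have hYV : Y * V = 0 := hY4 r V hHPV
  have hZ : specNorm (U * Vᴴ + Y) ≤ 1 := specZ U V hU hV Y hUY hYV hY2
  -- ⟨W, H⟩ = 0
  have hWH : frobInner W H = 0 := by
    set S : Finset (Fin n) := Finset.image ω Finset.univ with hS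
    set v : Fin n → ℂ := fun k => if k ∈ S then 0 else frobInner (A k) W with hv
    have hAsamp : AsampSet A ω W = ∑ k, (if k ∈ S then frobInner (A k) W else 0) • A k := by
      rw [AsampSet, ← hS]
      rw [show (∑ k, (if k ∈ S then frobInner (A k) W else 0) • A k)
          = ∑ k, (if k ∈ S then frobInner (A k) W • A k else 0) from
        Finset.sum_congr rfl fun k _ => by split <;> simp]
      rw [Finset.sum_ite_mem, Finset.univ_inter]
    have hsum : (∑ k, v k • A k) = Aproj A W - AsampSet A ω W := by
      rw [Aproj, hAsamp, ← Finset.sum_sub_distrib]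
      refine Finset.sum_congr rfl fun k _ => ?_
      by_cases hk : k ∈ S
      · simp [hv, hk]
      · simp [hv, hk]
    have hv0 : v = 0 := by
      apply hLinj
      show (∑ k, v k • A k) = ∑ k, (0 : Fin n → ℂ) k • A k
      rw [hsum, hW1]
      simp
    have hAkW : ∀ k, k ∉ S → frobInner (A k) W = 0 := by
      intro k hk
      have := congrFun hv0 k
      simpa [hv, hk] using this
    rw [hHdef, frobInner_sum_right]
    refine Finset.sum_eq_zero fun k _ => ?_
    rw [frobInner_smul_right]
    by_cases hk : k ∈ S
    · obtain ⟨j, _, hj⟩ := Finset.mem_image.mp hk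
      rw [show h k = 0 from by rw [← hj]; exact hhω j, zero_mul]
    · rw [frobInner_conj_symm W (A k), hAkW k hk, map_zero, mul_zero]
  -- decomposition of Re⟨UVᴴ, H⟩
  have hsplitUV : frobInner (U * Vᴴ) H = frobInner (U * Vᴴ - W) H + frobInner W H := by
    rw [← frobInner_add_left, sub_add_cancel]
  have horthdec : frobInner (U * Vᴴ - W) H
      = frobInner (PT U V (U * Vᴴ - W)) HT + frobInner (PTperp U V (U * Vᴴ - W)) HP := by
    rw [hHT, hHP]
    exact PT_PTperp_orth U V hU hV _ H
  have hPTC : PT U V (U * Vᴴ - W) = -PT U V (W - U * Vᴴ) := by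
    rw [PT_sub, PT_sub]
    abel
  have hPTperpC : PTperp U V (U * Vᴴ - W) = -PTperp U V W := by
    simp only [PTperp, PT_sub, PT_UV U V hU hV]
    abel
  have hbound1 : -(1 / (7 * (n : ℝ)) * frobNorm HT) ≤ (frobInner (PT U V (U * Vᴴ - W)) HT).re := by
    rw [hPTC, frobInner_neg_left, Complex.neg_re, neg_le_neg_iff]
    refine (re_frobInner_le _ _).trans ?_
    exact mul_le_mul_of_nonneg_right hW2 (frobNorm_nonneg HT)
  have hbound2 : -(1 / 2 * nuclearNorm HP) ≤ (frobInner (PTperp U V (U * Vᴴ - W)) HP).re := by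
    rw [hPTperpC, frobInner_neg_left, Complex.neg_re, neg_le_neg_iff]
    refine (re_frobInner_le_spec_nuc _ _).trans ?_
    exact mul_le_mul_of_nonneg_right hW3 (nuclearNorm_nonneg HP)
  have hUVH : -(1 / (7 * (n : ℝ)) * frobNorm HT) - 1 / 2 * nuclearNorm HP
      ≤ (frobInner (U * Vᴴ) H).re := by
    rw [hsplitUV, hWH, add_zero, horthdec, Complex.add_re]
    linarith
  -- ⟨Y, H⟩
  have hPTY : PT U V Y = 0 := PT_eq_zero_of U V Y hUY hYV
  have hYHT : frobInner Y HT = 0 := by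
    rw [hHT, ← PT_adjoint, hPTY, frobInner_zero_left]
  have hYH : (frobInner Y H).re = nuclearNorm HP := by
    rw [hHsplit, frobInner_add_right, hYHT, zero_add, hY1]
  -- duality
  have hdual : (frobInner (U * Vᴴ + Y) (∑ k, g k • A k)).re
      ≤ nuclearNorm (∑ k, g k • A k) := by
    refine (re_frobInner_le_spec_nuc _ _).trans ?_
    calc specNorm (U * Vᴴ + Y) * nuclearNorm (∑ k, g k • A k)
        ≤ 1 * nuclearNorm (∑ k, g k • A k) :=
          mul_le_mul_of_nonneg_right hZ (nuclearNorm_nonneg _)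
      _ = _ := one_mul _
  have hnnX : nuclearNorm (∑ k, x k • A k) = ∑ i, σ i := by
    rw [hsvd]
    exact nuclearNorm_svd U V hU hV σ (fun i => le_of_lt (hσ i))
  have hexpand : (frobInner (U * Vᴴ + Y) (∑ k, g k • A k)).re
      = (∑ i, σ i) + (frobInner (U * Vᴴ) H).re + nuclearNorm HP := by
    rw [hgx, frobInner_add_left, frobInner_add_right, frobInner_add_right]
    rw [hsvd, frobInner_UV_X U V hU hV σ, frobInner_Y_X_zero U V Y hUY _]
    rw [Complex.add_re, Complex.add_re, Complex.add_re, Complex.re_sum, Complex.zero_re, hYH]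
    rw [show (∑ i, ((σ i : ℝ) : ℂ).re) = ∑ i, σ i from
      Finset.sum_congr rfl fun i _ => Complex.ofReal_re _]
    ring
  -- final arithmetic
  have hkey : 1 / (7 * (n : ℝ)) * frobNorm HT ≤ 3 / 7 * nuclearNorm HP := by
    have h7n : (0 : ℝ) < 7 * (n : ℝ) := by positivity
    have ha2 : frobNorm HT ≤ 2 * ((n : ℝ) + 1) * nuclearNorm HP := by
      refine hstepA.trans ?_
      exact mul_le_mul_of_nonneg_left hbn (by positivity)
    have hx : 2 * ((n : ℝ) + 1) * nuclearNorm HP ≤ 3 * (n : ℝ) * nuclearNorm HP := by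
      nlinarith [mul_nonneg (by linarith : (0:ℝ) ≤ (n:ℝ) - 2) (le_of_lt hbnpos)]
    rw [show 1 / (7 * (n : ℝ)) * frobNorm HT = frobNorm HT / (7 * (n : ℝ)) by ring,
      div_le_iff₀ h7n]
    calc frobNorm HT ≤ 2 * ((n : ℝ) + 1) * nuclearNorm HP := ha2
      _ ≤ 3 * (n : ℝ) * nuclearNorm HP := hx
      _ = 3 / 7 * nuclearNorm HP * (7 * (n : ℝ)) := by ring
  have hfinal : nuclearNorm (∑ k, x k • A k) + 1 / 14 * nuclearNorm HP
      ≤ nuclearNorm (∑ k, g k • A k) := by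
    have := hdual
    rw [hexpand] at this
    rw [hnnX]
    linarith
  linarith


/-- Dual certificate lemma: local isometry on the tangent space plus a
dual certificate `W` implies that `x` is the unique nuclear norm minimizer consistent
with the sampled entries. -/
theorem dual_certificate_unique_minimizer
    (n1 n2 n r m : ℕ) (hm : 0 < m)
    (A : Fin n → Matrix (Fin n1) (Fin n2) ℂ)
    (horth : ∀ k l, frobInner (A k) (A l) = if k = l then 1 else 0)
    (hLinj : Function.Injective fun v : Fin n → ℂ => ∑ k, v k • A k)
    (x : Fin n → ℂ)
    (U : Matrix (Fin n1) (Fin r) ℂ) (V : Matrix (Fin n2) (Fin r) ℂ)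
    (hU : Uᴴ * U = 1) (hV : Vᴴ * V = 1)
    (σ : Fin r → ℝ) (hσ : ∀ i, 0 < σ i)
    (hsvd : (∑ k, x k • A k) = U * Matrix.diagonal (fun i => (σ i : ℂ)) * Vᴴ)
    (ω : Fin m → Fin n)
    (hiso : opNormFro (fun M : Matrix (Fin n1) (Fin n2) ℂ =>
        ((n : ℝ) / (m : ℝ)) • PT U V (AsampMulti A ω (PT U V M)) -
          PT U V (Aproj A (PT U V M))) ≤ 1 / 2)
    (W : Matrix (Fin n1) (Fin n2) ℂ)
    (hW1 : Aproj A W - AsampSet A ω W = 0)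
    (hW2 : frobNorm (PT U V (W - U * Vᴴ)) ≤ 1 / (7 * (n : ℝ)))
    (hW3 : specNorm (PTperp U V W) ≤ 1 / 2) :
    ∀ g : Fin n → ℂ, (∀ j, g (ω j) = x (ω j)) → g ≠ x →
      nuclearNorm (∑ k, x k • A k) < nuclearNorm (∑ k, g k • A k) :=
  dc_aux n1 n2 n r m hm A horth hLinj x U V hU hV σ hσ hsvd ω hiso W hW1 hW2 hW3
end

section
/- Let A_1,…,A_n ∈ ℂ^{n1×n2} satisfy: (i) every nonzero entry of A_k equals ‖A_k‖₀^{−1/2}, where ‖A_k‖₀ is the number of nonzero entries of A_k; (ii) each row and each column of each A_k has at most one nonzero entry; (iii) the supports of distinct A_k are pairwise disjoint and their union is all of {1,…,n1}×{1,…,n2}; (iv) ‖A_k‖₀ = min(n1,n2) for every k. Let U ∈ ℂ^{n1×r} and V ∈ ℂ^{n2×r} have orthonormal columns with max_{1≤i≤n1} ‖Uᴴe_i‖₂² ≤ μr/n1 and max_{1≤j≤n2} ‖Vᴴe_j‖₂² ≤ μr/n2, and let 𝒫_T(M) = UUᴴM + MVVᴴ − UUᴴMVVᴴ. Define ‖M‖_{𝒜,∞}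 := max_{1≤k≤n} |⟨A_k, M⟩|·‖A_k‖ and ‖M‖_{𝒜,2}² := ∑_{k=1}^n |⟨A_k, M⟩|²·‖A_k‖², where ‖A_k‖ is the spectral norm. Then: (a) ‖UVᴴ‖_{𝒜,∞} ≤ μr/min(n1,n2); (b) ‖UVᴴ‖_{𝒜,2}² ≤ μr/min(n1,n2); and (c) ‖𝒫_T(‖A_k‖₀^{1/2}·A_k)‖_{𝒜,2}² ≤ 9μr/min(n1,n2) for every k = 1,…,n. -/
open Matrix

/-- Number of nonzero entries `‖B‖₀`. -/
noncomputable def nnz {n1 n2 : ℕ} (B : Matrix (Fin n1) (Fin n2) ℂ) : ℕ :=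
  {ij : Fin n1 × Fin n2 | B ij.1 ij.2 ≠ 0}.ncard

/-! ### Auxiliary material -/

/-- Squared Frobenius norm. -/
noncomputable def wbF2 {m n : ℕ} (M : Matrix (Fin m) (Fin n) ℂ) : ℝ :=
  ∑ i, ∑ j, ‖M i j‖ ^ 2

lemma wbF2_nonneg {m n : ℕ} (M : Matrix (Fin m) (Fin n) ℂ) : 0 ≤ wbF2 M := by
  unfold wbF2; positivity

lemma wb_frobInner_eq_sum {m n : ℕ} (A B : Matrix (Fin m) (Fin n) ℂ) :
    frobInner A B = ∑ ij : Fin m × Fin n, (starRingEnd ℂ) (A ij.1 ij.2) * B ij.1 ij.2 := by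
  rw [Fintype.sum_prod_type_right]
  unfold frobInner
  rw [Matrix.trace, Finset.sum_comm]
  simp [Matrix.diag, Matrix.mul_apply, Matrix.conjTranspose_apply]
  exact Finset.sum_comm

lemma wb_frobInner_self {m n : ℕ} (M : Matrix (Fin m) (Fin n) ℂ) :
    frobInner M M = ((wbF2 M : ℝ) : ℂ) := by
  rw [wb_frobInner_eq_sum]
  unfold wbF2
  rw [Fintype.sum_prod_type, Complex.ofReal_sum]
  refine Finset.sum_congr rfl fun i _ => ?_
  rw [Complex.ofReal_sum]
  refine Finset.sum_congr rfl fun j _ => ?_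
  rw [RCLike.conj_mul (M i j)]
  norm_num

lemma wb_aux_col {m r : ℕ} (U : Matrix (Fin m) (Fin r) ℂ) (hU : Uᴴ * U = 1) (l : Fin m) :
    ∑ i, ‖(U * Uᴴ) i l‖ ^ 2 = ∑ c, ‖U l c‖ ^ 2 := by
  have key : ((U * Uᴴ)ᴴ * (U * Uᴴ)) l l = (U * Uᴴ) l l := by
    rw [Matrix.conjTranspose_mul, Matrix.conjTranspose_conjTranspose,
      Matrix.mul_assoc, ← Matrix.mul_assoc Uᴴ U, hU, Matrix.one_mul]
  have h1 : ((U * Uᴴ)ᴴ * (U * Uᴴ)) l l = ∑ i, ((‖(U * Uᴴ) i l‖ ^ 2 : ℝ) : ℂ) := by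
    rw [Matrix.mul_apply]
    refine Finset.sum_congr rfl fun i _ => ?_
    rw [Matrix.conjTranspose_apply,
      show star ((U * Uᴴ) i l) = (starRingEnd ℂ) ((U * Uᴴ) i l) from rfl,
      RCLike.conj_mul]
    norm_num
  have h2 : (U * Uᴴ) l l = ∑ c, ((‖U l c‖ ^ 2 : ℝ) : ℂ) := by
    rw [Matrix.mul_apply]
    refine Finset.sum_congr rfl fun c _ => ?_
    rw [Matrix.conjTranspose_apply,
      show star (U l c) = (starRingEnd ℂ) (U l c) from rfl,
      RCLike.mul_conj]
    norm_num
  have h3 := key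
  rw [h1, h2, ← Complex.ofReal_sum, ← Complex.ofReal_sum] at h3
  exact_mod_cast h3

lemma wb_frob_idem_left {m n : ℕ} (Q : Matrix (Fin m) (Fin m) ℂ) (hQh : Qᴴ = Q)
    (hQQ : Q * Q = Q) (M : Matrix (Fin m) (Fin n) ℂ) :
    frobInner (Q * M) (Q * M) = (Mᴴ * (Q * M)).trace := by
  unfold frobInner
  rw [Matrix.conjTranspose_mul, hQh, Matrix.mul_assoc, ← Matrix.mul_assoc Q Q M, hQQ]

lemma wb_frob_idem_right {m n : ℕ} (W : Matrix (Fin n) (Fin n) ℂ) (hWh : Wᴴ = W)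
    (hWW : W * W = W) (M : Matrix (Fin m) (Fin n) ℂ) :
    frobInner (M * W) (M * W) = (Mᴴ * M * W).trace := by
  unfold frobInner
  rw [Matrix.conjTranspose_mul, hWh, Matrix.trace_mul_comm (W * Mᴴ) (M * W),
    Matrix.mul_assoc M W (W * Mᴴ), ← Matrix.mul_assoc W W Mᴴ, hWW,
    Matrix.trace_mul_comm M (W * Mᴴ), Matrix.mul_assoc W Mᴴ M,
    Matrix.trace_mul_comm W (Mᴴ * M)]

lemma wbF2_projL {m n r : ℕ} (U : Matrix (Fin m) (Fin r) ℂ) (hU : Uᴴ * U = 1)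
    (M : Matrix (Fin m) (Fin n) ℂ) : wbF2 (U * Uᴴ * M) ≤ wbF2 M := by
  set Q := U * Uᴴ with hQ
  have hQh : Qᴴ = Q := by rw [hQ, Matrix.conjTranspose_mul, Matrix.conjTranspose_conjTranspose]
  have hQQ : Q * Q = Q := by rw [hQ, Matrix.mul_assoc, ← Matrix.mul_assoc Uᴴ U, hU, Matrix.one_mul]
  have h1h : (1 - Q)ᴴ = 1 - Q := by rw [Matrix.conjTranspose_sub, Matrix.conjTranspose_one, hQh]
  have h1Q : (1 - Q) * (1 - Q) = 1 - Q := by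
    rw [Matrix.sub_mul, Matrix.one_mul, Matrix.mul_sub, Matrix.mul_one, hQQ]; abel
  have sum_eq : frobInner (Q * M) (Q * M) + frobInner ((1 - Q) * M) ((1 - Q) * M)
      = frobInner M M := by
    rw [wb_frob_idem_left Q hQh hQQ M, wb_frob_idem_left (1 - Q) h1h h1Q M, ← Matrix.trace_add,
      ← Matrix.mul_add, ← Matrix.add_mul]
    have : Q + (1 - Q) = 1 := by abel
    rw [this, Matrix.one_mul]
    rfl
  rw [wb_frobInner_self, wb_frobInner_self, wb_frobInner_self] at sum_eq
  have sum_eq' : wbF2 (Q * M) + wbF2 ((1 - Q) * M) = wbF2 M := by exact_mod_cast sum_eq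
  linarith [wbF2_nonneg ((1 - Q) * M)]

lemma wbF2_projR {m n r : ℕ} (V : Matrix (Fin n) (Fin r) ℂ) (hV : Vᴴ * V = 1)
    (M : Matrix (Fin m) (Fin n) ℂ) : wbF2 (M * (V * Vᴴ)) ≤ wbF2 M := by
  set W := V * Vᴴ with hW
  have hWh : Wᴴ = W := by rw [hW, Matrix.conjTranspose_mul, Matrix.conjTranspose_conjTranspose]
  have hWW : W * W = W := by rw [hW, Matrix.mul_assoc, ← Matrix.mul_assoc Vᴴ V, hV, Matrix.one_mul]
  have h1h : (1 - W)ᴴ = 1 - W := by rw [Matrix.conjTranspose_sub, Matrix.conjTranspose_one, hWh]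
  have h1W : (1 - W) * (1 - W) = 1 - W := by
    rw [Matrix.sub_mul, Matrix.one_mul, Matrix.mul_sub, Matrix.mul_one, hWW]; abel
  have sum_eq : frobInner (M * W) (M * W) + frobInner (M * (1 - W)) (M * (1 - W))
      = frobInner M M := by
    rw [wb_frob_idem_right W hWh hWW M, wb_frob_idem_right (1 - W) h1h h1W M, ← Matrix.trace_add,
      ← Matrix.mul_add]
    have : W + (1 - W) = 1 := by abel
    rw [this, Matrix.mul_one]
    rfl
  rw [wb_frobInner_self, wb_frobInner_self, wb_frobInner_self] at sum_eq
  have sum_eq' : wbF2 (M * W) + wbF2 (M * (1 - W)) = wbF2 M := by exact_mod_cast sum_eq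
  linarith [wbF2_nonneg (M * (1 - W))]

lemma wbF2_conjTranspose {m n : ℕ} (M : Matrix (Fin m) (Fin n) ℂ) : wbF2 Mᴴ = wbF2 M := by
  unfold wbF2
  rw [Finset.sum_comm]
  refine Finset.sum_congr rfl fun i _ => Finset.sum_congr rfl fun j _ => ?_
  rw [Matrix.conjTranspose_apply, norm_star]

lemma wbF2_three {m n : ℕ} (X Y Z : Matrix (Fin m) (Fin n) ℂ) :
    wbF2 (X + Y - Z) ≤ 3 * (wbF2 X + wbF2 Y + wbF2 Z) := by
  unfold wbF2
  calc ∑ i, ∑ j, ‖(X + Y - Z) i j‖ ^ 2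
      ≤ ∑ i, ∑ j, (3 * (‖X i j‖ ^ 2 + ‖Y i j‖ ^ 2 + ‖Z i j‖ ^ 2)) := by
        refine Finset.sum_le_sum fun i _ => Finset.sum_le_sum fun j _ => ?_
        have he : (X + Y - Z) i j = X i j + Y i j - Z i j := by
          simp [Matrix.sub_apply, Matrix.add_apply]
        rw [he]
        have htr : ‖X i j + Y i j - Z i j‖ ≤ ‖X i j‖ + ‖Y i j‖ + ‖Z i j‖ :=
          le_trans (norm_sub_le _ _) (by gcongr; exact norm_add_le _ _)
        have hsq : ‖X i j + Y i j - Z i j‖ ^ 2 ≤ (‖X i j‖ + ‖Y i j‖ + ‖Z i j‖) ^ 2 :=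
          pow_le_pow_left₀ (norm_nonneg _) htr 2
        nlinarith [sq_nonneg (‖X i j‖ - ‖Y i j‖), sq_nonneg (‖X i j‖ - ‖Z i j‖),
          sq_nonneg (‖Y i j‖ - ‖Z i j‖)]
    _ = 3 * (∑ i, ∑ j, ‖X i j‖ ^ 2 + ∑ i, ∑ j, ‖Y i j‖ ^ 2 + ∑ i, ∑ j, ‖Z i j‖ ^ 2) := by
        simp only [Finset.sum_add_distrib, Finset.mul_sum, mul_add]

lemma wb_spec_nonneg {m n : ℕ} (A : Matrix (Fin m) (Fin n) ℂ) : 0 ≤ specNorm A :=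
  norm_nonneg _

lemma wb_spec_le {n1 n2 : ℕ} (B : Matrix (Fin n1) (Fin n2) ℂ) (c : ℝ) (hc : 0 ≤ c)
    (hrow : ∀ i j j', B i j ≠ 0 → B i j' ≠ 0 → j = j')
    (hcolsum : ∀ j, ∑ i, ‖B i j‖ ^ 2 ≤ c ^ 2) :
    specNorm B ≤ c := by
  apply ContinuousLinearMap.opNorm_le_bound _ hc
  intro x
  show ‖Matrix.toEuclideanLin B x‖ ≤ c * ‖x‖
  rw [EuclideanSpace.norm_eq, EuclideanSpace.norm_eq]
  have hentry : ∀ i, (Matrix.toEuclideanLin B x) i = ∑ j, B i j * x j := by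
    intro i
    simp [Matrix.toEuclideanLin_apply, Matrix.mulVec, dotProduct]
  have key : ∑ i, ‖(Matrix.toEuclideanLin B x) i‖ ^ 2 ≤ c ^ 2 * ∑ j, ‖x j‖ ^ 2 := by
    calc ∑ i, ‖(Matrix.toEuclideanLin B x) i‖ ^ 2
        ≤ ∑ i, ∑ j, ‖B i j‖ ^ 2 * ‖x j‖ ^ 2 := by
          refine Finset.sum_le_sum fun i _ => ?_
          rw [hentry i]
          by_cases hz : ∃ j₀, B i j₀ ≠ 0
          · obtain ⟨j₀, hj₀⟩ := hz
            have hsum : ∑ j, B i j * x j = B i j₀ * x j₀ := by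
              refine Finset.sum_eq_single j₀ (fun j _ hne => ?_) (by simp)
              by_contra hBx
              have hBj : B i j ≠ 0 := fun h => hBx (by rw [h, zero_mul])
              exact hne (hrow i j j₀ hBj hj₀)
            rw [hsum]
            have : ‖B i j₀ * x j₀‖ ^ 2 = ‖B i j₀‖ ^ 2 * ‖x j₀‖ ^ 2 := by
              rw [norm_mul, mul_pow]
            rw [this]
            exact Finset.single_le_sum (f := fun j => ‖B i j‖ ^ 2 * ‖x j‖ ^ 2)
              (fun j _ => by positivity) (Finset.mem_univ j₀)
          · push_neg at hz
            have : ∑ j, B i j * x j = 0 := by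
              refine Finset.sum_eq_zero fun j _ => by rw [hz j, zero_mul]
            rw [this, norm_zero]
            simpa using Finset.sum_nonneg fun j _ =>
              (by positivity : (0:ℝ) ≤ ‖B i j‖ ^ 2 * ‖x j‖ ^ 2)
      _ = ∑ j, (∑ i, ‖B i j‖ ^ 2) * ‖x j‖ ^ 2 := by
          rw [Finset.sum_comm]
          exact Finset.sum_congr rfl fun j _ => by rw [Finset.sum_mul]
      _ ≤ ∑ j, c ^ 2 * ‖x j‖ ^ 2 := by
          refine Finset.sum_le_sum fun j _ => ?_
          exact mul_le_mul_of_nonneg_right (hcolsum j) (by positivity)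
      _ = c ^ 2 * ∑ j, ‖x j‖ ^ 2 := by rw [Finset.mul_sum]
  have h1 : Real.sqrt (∑ i, ‖(Matrix.toEuclideanLin B x) i‖ ^ 2)
      ≤ Real.sqrt (c ^ 2 * ∑ j, ‖x j‖ ^ 2) := Real.sqrt_le_sqrt key
  rwa [Real.sqrt_mul (by positivity), Real.sqrt_sq hc] at h1

/-- Bound `F2 (Q * P)` when each column of `P` has at most one nonzero entry of norm ≤ 1. -/
lemma wbF2_mul_le {m p : ℕ} (Q : Matrix (Fin m) (Fin m) ℂ) (P : Matrix (Fin m) (Fin p) ℂ)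
    (b : ℝ) (t : ℕ) (hb : 0 ≤ b)
    (hcolP : ∀ l l' j, P l j ≠ 0 → P l' j ≠ 0 → l = l')
    (hPval : ∀ l j, ‖P l j‖ ≤ 1)
    (hcols : (Finset.univ.filter (fun j : Fin p => ∃ l, P l j ≠ 0)).card ≤ t)
    (hQcol : ∀ l, ∑ i, ‖Q i l‖ ^ 2 ≤ b) :
    wbF2 (Q * P) ≤ (t : ℝ) * b := by
  classical
  unfold wbF2
  rw [Finset.sum_comm]
  set C := Finset.univ.filter (fun j : Fin p => ∃ l, P l j ≠ 0) with hC
  have hzero : ∀ j ∉ C, ∑ i, ‖(Q * P) i j‖ ^ 2 = 0 := by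
    intro j hj
    have hnone : ∀ l, P l j = 0 := by
      intro l
      by_contra h
      exact hj (by simp [hC, Finset.mem_filter]; exact ⟨l, h⟩)
    refine Finset.sum_eq_zero fun i _ => ?_
    have : (Q * P) i j = 0 := by
      rw [Matrix.mul_apply]
      exact Finset.sum_eq_zero fun l _ => by rw [hnone l, mul_zero]
    rw [this, norm_zero]; norm_num
  have hbound : ∀ j ∈ C, ∑ i, ‖(Q * P) i j‖ ^ 2 ≤ b := by
    intro j hj
    obtain ⟨l, hl⟩ : ∃ l, P l j ≠ 0 := by simpa [hC, Finset.mem_filter] using hj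
    have hentry : ∀ i, (Q * P) i j = Q i l * P l j := by
      intro i
      rw [Matrix.mul_apply]
      refine Finset.sum_eq_single l (fun l' _ hne => ?_) (by simp)
      by_contra h
      have : P l' j ≠ 0 := fun h0 => h (by rw [h0, mul_zero])
      exact hne (hcolP l' l j this hl)
    calc ∑ i, ‖(Q * P) i j‖ ^ 2 = ∑ i, ‖Q i l‖ ^ 2 * ‖P l j‖ ^ 2 := by
          refine Finset.sum_congr rfl fun i _ => ?_
          rw [hentry i, norm_mul, mul_pow]
      _ ≤ ∑ i, ‖Q i l‖ ^ 2 := by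
          refine Finset.sum_le_sum fun i _ => ?_
          have h1 : ‖P l j‖ ^ 2 ≤ 1 := by
            nlinarith [norm_nonneg (P l j), hPval l j]
          exact mul_le_of_le_one_right (by positivity) h1
      _ ≤ b := hQcol l
  calc ∑ j, ∑ i, ‖(Q * P) i j‖ ^ 2 = ∑ j ∈ C, ∑ i, ‖(Q * P) i j‖ ^ 2 := by
        symm
        apply Finset.sum_subset (Finset.subset_univ C)
        intro j _ hj
        exact hzero j hj
    _ ≤ ∑ _j ∈ C, b := Finset.sum_le_sum hbound
    _ = (C.card : ℝ) * b := by rw [Finset.sum_const, nsmul_eq_mul]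
    _ ≤ (t : ℝ) * b := by
        apply mul_le_mul_of_nonneg_right _ hb
        exact_mod_cast hcols

/-- Incoherence bounds in the `𝒜`-norms for a basis family with the
wrap-around property: `‖UVᴴ‖_{𝒜,∞} ≤ μr/min(n1,n2)`, `‖UVᴴ‖_{𝒜,2}² ≤ μr/min(n1,n2)`,
and `‖𝒫_T(‖A_k‖₀^{1/2} A_k)‖_{𝒜,2}² ≤ 9μr/min(n1,n2)`. -/
theorem wraparound_basis_incoherence_bounds
    (n1 n2 n r : ℕ) (μ : ℝ)
    (A : Fin n → Matrix (Fin n1) (Fin n2) ℂ)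
    (hval : ∀ k i j, A k i j ≠ 0 → A k i j = (((Real.sqrt (nnz (A k)))⁻¹ : ℝ) : ℂ))
    (hrow : ∀ k i j j', A k i j ≠ 0 → A k i j' ≠ 0 → j = j')
    (hcol : ∀ k i i' j, A k i j ≠ 0 → A k i' j ≠ 0 → i = i')
    (hdisj : ∀ k k' i j, A k i j ≠ 0 → A k' i j ≠ 0 → k = k')
    (hcover : ∀ i j, ∃ k, A k i j ≠ 0)
    (hwrap : ∀ k, nnz (A k) = min n1 n2)
    (U : Matrix (Fin n1) (Fin r) ℂ) (V : Matrix (Fin n2) (Fin r) ℂ)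
    (hU : Uᴴ * U = 1) (hV : Vᴴ * V = 1)
    (hUinc : ∀ i, ∑ c, ‖U i c‖ ^ 2 ≤ μ * r / n1)
    (hVinc : ∀ j, ∑ c, ‖V j c‖ ^ 2 ≤ μ * r / n2) :
    (∀ k, ‖frobInner (A k) (U * Vᴴ)‖ * specNorm (A k) ≤
        μ * r / ((min n1 n2 : ℕ) : ℝ)) ∧
      (∑ k, ‖frobInner (A k) (U * Vᴴ)‖ ^ 2 * specNorm (A k) ^ 2 ≤
        μ * r / ((min n1 n2 : ℕ) : ℝ)) ∧
      (∀ k₀, ∑ k,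
          ‖frobInner (A k) (PT U V (((Real.sqrt (nnz (A k₀)) : ℝ) : ℂ) • A k₀))‖ ^ 2 *
            specNorm (A k) ^ 2 ≤
        9 * μ * r / ((min n1 n2 : ℕ) : ℝ)) := by
  classical
  set Ω : Fin n → Finset (Fin n1 × Fin n2) :=
    fun k => Finset.univ.filter (fun ij => A k ij.1 ij.2 ≠ 0) with hΩ
  have hnnz : ∀ k, nnz (A k) = (Ω k).card := by
    intro k
    unfold nnz
    rw [show {ij : Fin n1 × Fin n2 | A k ij.1 ij.2 ≠ 0} = ↑(Ω k) by
      ext ij; simp [hΩ]]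
    exact Set.ncard_coe_finset _
  have hcard : ∀ k, (Ω k).card = min n1 n2 := fun k => by rw [← hnnz, hwrap]
  by_cases hs0 : min n1 n2 = 0
  · -- degenerate case: all `A k` vanish
    have hA0 : ∀ k, A k = 0 := by
      intro k
      ext i j
      by_contra h
      have hmem : (i, j) ∈ Ω k := by
        simp only [hΩ, Finset.mem_filter, Finset.mem_univ, true_and]
        simpa using h
      have hc0 : (Ω k).card = 0 := by rw [hcard k, hs0]
      rw [Finset.card_eq_zero] at hc0
      simp [hc0] at hmem
    have hfz : ∀ k (M : Matrix (Fin n1) (Fin n2) ℂ), frobInner (A k) M = 0 := by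
      intro k M
      unfold frobInner
      rw [hA0 k]
      simp
    refine ⟨?_, ?_, ?_⟩
    · intro k; rw [hfz]; simp [hs0]
    · simp [hfz, hs0]
    · intro k₀; simp [hfz, hs0]
  · -- main case
    have hsp : 0 < min n1 n2 := Nat.pos_of_ne_zero hs0
    have hn1 : 0 < n1 := lt_of_lt_of_le hsp (min_le_left _ _)
    have hn2 : 0 < n2 := lt_of_lt_of_le hsp (min_le_right _ _)
    set sR : ℝ := ((min n1 n2 : ℕ) : ℝ) with hsR
    have hsRpos : 0 < sR := by rw [hsR]; exact_mod_cast hsp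
    have hsqrt : 0 < Real.sqrt sR := Real.sqrt_pos.mpr hsRpos
    have hsq : Real.sqrt sR * Real.sqrt sR = sR := Real.mul_self_sqrt hsRpos.le
    have hn1R : (0:ℝ) < n1 := by exact_mod_cast hn1
    have hn2R : (0:ℝ) < n2 := by exact_mod_cast hn2
    have hsRn1 : sR ≤ (n1:ℝ) := by rw [hsR]; exact_mod_cast min_le_left n1 n2
    have hsRn2 : sR ≤ (n2:ℝ) := by rw [hsR]; exact_mod_cast min_le_right n1 n2
    have hcardR : ∀ k, ((Ω k).card : ℝ) = sR := fun k => by rw [hcard k]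
    have hμr : 0 ≤ μ * r := by
      have h0 := hUinc ⟨0, hn1⟩
      have h1 : (0:ℝ) ≤ ∑ c, ‖U ⟨0, hn1⟩ c‖ ^ 2 := by positivity
      have h2 : (0:ℝ) ≤ μ * r / n1 := le_trans h1 h0
      have h3 := mul_nonneg h2 hn1R.le
      rwa [div_mul_cancel₀ _ (ne_of_gt hn1R)] at h3
    have hμrn1 : (0:ℝ) ≤ μ * r / n1 := div_nonneg hμr hn1R.le
    have hμrn2 : (0:ℝ) ≤ μ * r / n2 := div_nonneg hμr hn2R.le
    have hnormA : ∀ k i j, A k i j ≠ 0 → ‖A k i j‖ = (Real.sqrt sR)⁻¹ := by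
      intro k i j h
      rw [hval k i j h, hwrap k, Complex.norm_real, Real.norm_eq_abs,
        abs_of_nonneg (by positivity : (0:ℝ) ≤ (Real.sqrt ((min n1 n2 : ℕ) : ℝ))⁻¹), hsR]
    have hspec : ∀ k, specNorm (A k) ≤ (Real.sqrt sR)⁻¹ := by
      intro k
      apply wb_spec_le _ _ (by positivity) (hrow k)
      intro j
      by_cases hz : ∃ i₀, A k i₀ j ≠ 0
      · obtain ⟨i₀, hi₀⟩ := hz
        have hsum : ∑ i, ‖A k i j‖ ^ 2 = ‖A k i₀ j‖ ^ 2 := by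
          refine Finset.sum_eq_single i₀ (fun i _ hne => ?_) (by simp)
          have : A k i j = 0 := by
            by_contra h
            exact hne (hcol k i i₀ j h hi₀)
          rw [this, norm_zero]
          norm_num
        rw [hsum, hnormA k i₀ j hi₀]
      · push_neg at hz
        have hsum : ∑ i, ‖A k i j‖ ^ 2 = 0 := by
          refine Finset.sum_eq_zero fun i _ => by rw [hz i, norm_zero]; norm_num
        rw [hsum]
        positivity
    have hspec2 : ∀ k, specNorm (A k) ^ 2 ≤ sR⁻¹ := by
      intro k
      have h2 : specNorm (A k) ^ 2 ≤ ((Real.sqrt sR)⁻¹) ^ 2 :=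
        pow_le_pow_left₀ (wb_spec_nonneg _) (hspec k) 2
      rwa [inv_pow, Real.sq_sqrt hsRpos.le] at h2
    have hfrob : ∀ k (M : Matrix (Fin n1) (Fin n2) ℂ),
        frobInner (A k) M = ∑ ij ∈ Ω k, (starRingEnd ℂ) (A k ij.1 ij.2) * M ij.1 ij.2 := by
      intro k M
      rw [wb_frobInner_eq_sum]
      symm
      apply Finset.sum_subset (Finset.subset_univ _)
      intro ij _ hij
      have : A k ij.1 ij.2 = 0 := by
        by_contra h
        exact hij (by simp only [hΩ, Finset.mem_filter, Finset.mem_univ, true_and]; simpa using h)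
      rw [this]
      simp
    have hfrob_le : ∀ k (M : Matrix (Fin n1) (Fin n2) ℂ),
        ‖frobInner (A k) M‖ ≤ (Real.sqrt sR)⁻¹ * ∑ ij ∈ Ω k, ‖M ij.1 ij.2‖ := by
      intro k M
      rw [hfrob k M]
      refine le_trans (norm_sum_le _ _) ?_
      rw [Finset.mul_sum]
      refine Finset.sum_le_sum fun ij hij => ?_
      have hA : A k ij.1 ij.2 ≠ 0 := by
        have := hij
        simp only [hΩ, Finset.mem_filter, Finset.mem_univ, true_and] at this
        simpa using this
      rw [norm_mul, RCLike.norm_conj, hnormA k _ _ hA]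
    have hKEY : ∀ (M : Matrix (Fin n1) (Fin n2) ℂ),
        ∑ k, ‖frobInner (A k) M‖ ^ 2 * specNorm (A k) ^ 2 ≤ wbF2 M / sR := by
      intro M
      have hterm : ∀ k, ‖frobInner (A k) M‖ ^ 2 * specNorm (A k) ^ 2
          ≤ (∑ ij ∈ Ω k, ‖M ij.1 ij.2‖ ^ 2) * sR⁻¹ := by
        intro k
        set S := ∑ ij ∈ Ω k, ‖M ij.1 ij.2‖ with hS
        set T := ∑ ij ∈ Ω k, ‖M ij.1 ij.2‖ ^ 2 with hT
        have hSnn : 0 ≤ S := Finset.sum_nonneg fun ij _ => norm_nonneg _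
        have hTnn : 0 ≤ T := Finset.sum_nonneg fun ij _ => by positivity
        have hCS : S ^ 2 ≤ sR * T := by
          have := sq_sum_le_card_mul_sum_sq
            (s := Ω k) (f := fun ij => ‖M ij.1 ij.2‖)
          rw [← hS, ← hT] at this
          calc S ^ 2 ≤ ((Ω k).card : ℝ) * T := this
            _ = sR * T := by rw [hcardR k]
        have h1 : ‖frobInner (A k) M‖ ^ 2 ≤ ((Real.sqrt sR)⁻¹ * S) ^ 2 :=
          pow_le_pow_left₀ (norm_nonneg _) (hfrob_le k M) 2
        have h2 : ((Real.sqrt sR)⁻¹ * S) ^ 2 = sR⁻¹ * S ^ 2 := by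
          rw [mul_pow, inv_pow, Real.sq_sqrt hsRpos.le]
        have h3 : ‖frobInner (A k) M‖ ^ 2 ≤ T := by
          rw [h2] at h1
          calc ‖frobInner (A k) M‖ ^ 2 ≤ sR⁻¹ * S ^ 2 := h1
            _ ≤ sR⁻¹ * (sR * T) := by
                exact mul_le_mul_of_nonneg_left hCS (by positivity)
            _ = T := by field_simp
        exact mul_le_mul h3 (hspec2 k) (by positivity) hTnn
      have hpart : ∑ k, ∑ ij ∈ Ω k, ‖M ij.1 ij.2‖ ^ 2 = wbF2 M := by
        have hΩeq : ∀ k, Ω k = Finset.univ.filter (fun ij : Fin n1 × Fin n2 =>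
            Classical.choose (hcover ij.1 ij.2) = k) := by
          intro k
          ext ij
          simp only [hΩ, Finset.mem_filter, Finset.mem_univ, true_and]
          constructor
          · intro h
            exact hdisj _ _ _ _ (Classical.choose_spec (hcover ij.1 ij.2)) h
          · rintro rfl
            exact Classical.choose_spec (hcover ij.1 ij.2)
        calc ∑ k, ∑ ij ∈ Ω k, ‖M ij.1 ij.2‖ ^ 2
            = ∑ k, ∑ ij ∈ Finset.univ.filter (fun ij : Fin n1 × Fin n2 =>
                Classical.choose (hcover ij.1 ij.2) = k), ‖M ij.1 ij.2‖ ^ 2 := by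
              exact Finset.sum_congr rfl fun k _ => by rw [hΩeq k]
          _ = ∑ ij : Fin n1 × Fin n2, ‖M ij.1 ij.2‖ ^ 2 :=
              Finset.sum_fiberwise _ _ _
          _ = wbF2 M := by
              unfold wbF2
              rw [Fintype.sum_prod_type]
      calc ∑ k, ‖frobInner (A k) M‖ ^ 2 * specNorm (A k) ^ 2
          ≤ ∑ k, (∑ ij ∈ Ω k, ‖M ij.1 ij.2‖ ^ 2) * sR⁻¹ :=
            Finset.sum_le_sum fun k _ => hterm k
        _ = (∑ k, ∑ ij ∈ Ω k, ‖M ij.1 ij.2‖ ^ 2) * sR⁻¹ := by rw [← Finset.sum_mul]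
        _ = wbF2 M * sR⁻¹ := by rw [hpart]
        _ = wbF2 M / sR := by rw [div_eq_mul_inv]
    -- entry bound for U * Vᴴ
    have hentryUV : ∀ i j, ‖(U * Vᴴ) i j‖ ≤ μ * r / sR := by
      intro i j
      have h1 : (U * Vᴴ) i j = ∑ c, U i c * star (V j c) := by
        rw [Matrix.mul_apply]
        exact Finset.sum_congr rfl fun c _ => by rw [Matrix.conjTranspose_apply]
      rw [h1]
      have hUi := hUinc i
      have hVj := hVinc j
      have hd1 : μ * r / n1 ≤ μ * r / sR := by gcongr
      have hd2 : μ * r / n2 ≤ μ * r / sR := by gcongr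
      calc ‖∑ c, U i c * star (V j c)‖ ≤ ∑ c, ‖U i c‖ * ‖V j c‖ := by
            refine le_trans (norm_sum_le _ _) (Finset.sum_le_sum fun c _ => ?_)
            rw [norm_mul, norm_star]
        _ ≤ ∑ c, (‖U i c‖ ^ 2 + ‖V j c‖ ^ 2) / 2 :=
            Finset.sum_le_sum fun c _ => by nlinarith [sq_nonneg (‖U i c‖ - ‖V j c‖)]
        _ = ((∑ c, ‖U i c‖ ^ 2) + ∑ c, ‖V j c‖ ^ 2) / 2 := by
            rw [← Finset.sum_add_distrib, Finset.sum_div]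
        _ ≤ μ * r / sR := by linarith
    refine ⟨?_, ?_, ?_⟩
    · -- part (a)
      intro k
      have h1 : ‖frobInner (A k) (U * Vᴴ)‖ ≤ (Real.sqrt sR)⁻¹ * (μ * r) := by
        refine le_trans (hfrob_le k _) ?_
        have h2 : ∑ ij ∈ Ω k, ‖(U * Vᴴ) ij.1 ij.2‖ ≤ ((Ω k).card : ℝ) * (μ * r / sR) := by
          calc ∑ ij ∈ Ω k, ‖(U * Vᴴ) ij.1 ij.2‖ ≤ ∑ _ij ∈ Ω k, μ * r / sR :=
                Finset.sum_le_sum fun ij _ => hentryUV _ _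
            _ = ((Ω k).card : ℝ) * (μ * r / sR) := by rw [Finset.sum_const, nsmul_eq_mul]
        have h3 : ((Ω k).card : ℝ) * (μ * r / sR) = μ * r := by
          rw [hcardR k]
          field_simp
        rw [h3] at h2
        exact mul_le_mul_of_nonneg_left h2 (by positivity)
      calc ‖frobInner (A k) (U * Vᴴ)‖ * specNorm (A k)
          ≤ ((Real.sqrt sR)⁻¹ * (μ * r)) * (Real.sqrt sR)⁻¹ :=
            mul_le_mul h1 (hspec k) (wb_spec_nonneg _) (by positivity)
        _ = μ * r / (Real.sqrt sR * Real.sqrt sR) := by ring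
        _ = μ * r / sR := by rw [hsq]
    · -- part (b)
      have hF2UV : wbF2 (U * Vᴴ) = (r : ℝ) := by
        have h1 : frobInner (U * Vᴴ) (U * Vᴴ) = ((r : ℝ) : ℂ) := by
          unfold frobInner
          rw [Matrix.conjTranspose_mul, Matrix.conjTranspose_conjTranspose,
            Matrix.mul_assoc V Uᴴ (U * Vᴴ), ← Matrix.mul_assoc Uᴴ U Vᴴ, hU, Matrix.one_mul,
            Matrix.trace_mul_comm V Vᴴ, hV, Matrix.trace_one]
          simp
        have h2 := wb_frobInner_self (U * Vᴴ)
        rw [h1] at h2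
        exact_mod_cast h2.symm
      have hrμr : (r : ℝ) ≤ μ * r := by
        have hFU : wbF2 U = (r : ℝ) := by
          have h1 : frobInner U U = ((r : ℝ) : ℂ) := by
            unfold frobInner
            rw [hU, Matrix.trace_one]
            simp
          have h2 := wb_frobInner_self U
          rw [h1] at h2
          exact_mod_cast h2.symm
        have h3 : wbF2 U ≤ (n1 : ℝ) * (μ * r / n1) := by
          unfold wbF2
          calc ∑ i, ∑ c, ‖U i c‖ ^ 2 ≤ ∑ _i : Fin n1, μ * r / n1 :=
              Finset.sum_le_sum fun i _ => hUinc i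
            _ = (n1 : ℝ) * (μ * r / n1) := by
              rw [Finset.sum_const, nsmul_eq_mul, Finset.card_univ, Fintype.card_fin]
        have h4 : (n1 : ℝ) * (μ * r / n1) = μ * r := by field_simp
        rw [hFU, h4] at h3
        exact h3
      refine le_trans (hKEY (U * Vᴴ)) ?_
      rw [hF2UV]
      gcongr
    · -- part (c)
      intro k₀
      set P : Matrix (Fin n1) (Fin n2) ℂ := ((Real.sqrt (nnz (A k₀)) : ℝ) : ℂ) • A k₀ with hP
      have hsA : ((Real.sqrt (nnz (A k₀)) : ℝ) : ℂ) ≠ 0 := by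
        rw [hwrap k₀]
        exact_mod_cast ne_of_gt hsqrt
      have hPsupp : ∀ i j, P i j ≠ 0 ↔ A k₀ i j ≠ 0 := by
        intro i j
        rw [hP]
        simp only [Matrix.smul_apply, smul_eq_mul, ne_eq, mul_eq_zero, not_or]
        constructor
        · exact fun h => h.2
        · exact fun h => ⟨hsA, h⟩
      have hPval : ∀ i j, ‖P i j‖ ≤ 1 := by
        intro i j
        by_cases h : A k₀ i j = 0
        · rw [hP]
          simp [h]
        · rw [hP]
          simp only [Matrix.smul_apply, smul_eq_mul, norm_mul]
          rw [hnormA k₀ i j h, hwrap k₀, Complex.norm_real, Real.norm_eq_abs,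
            abs_of_nonneg (Real.sqrt_nonneg _), ← hsR]
          exact le_of_eq (mul_inv_cancel₀ (ne_of_gt hsqrt))
      have hcolP : ∀ l l' j, P l j ≠ 0 → P l' j ≠ 0 → l = l' := by
        intro l l' j h h'
        exact hcol k₀ l l' j ((hPsupp l j).mp h) ((hPsupp l' j).mp h')
      have hrowPH : ∀ l l' j, Pᴴ l j ≠ 0 → Pᴴ l' j ≠ 0 → l = l' := by
        intro l l' j h h'
        rw [Matrix.conjTranspose_apply, star_ne_zero] at h h'
        exact hrow k₀ j l l' ((hPsupp j l).mp h) ((hPsupp j l').mp h')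
      have hPHval : ∀ l j, ‖Pᴴ l j‖ ≤ 1 := by
        intro l j
        rw [Matrix.conjTranspose_apply, norm_star]
        exact hPval j l
      have hColCard :
          (Finset.univ.filter (fun j : Fin n2 => ∃ l, P l j ≠ 0)).card ≤ min n1 n2 := by
        rw [← hcard k₀]
        apply Finset.card_le_card_of_injOn
          (fun j => (if h : ∃ l, A k₀ l j ≠ 0 then Classical.choose h else ⟨0, hn1⟩, j))
        · intro j hj
          simp only [Finset.mem_coe, Finset.mem_filter, Finset.mem_univ, true_and] at hj
          obtain ⟨l, hl⟩ := hj
          have hA : ∃ l, A k₀ l j ≠ 0 := ⟨l, (hPsupp l j).mp hl⟩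
          simp only [Finset.mem_coe, hΩ, Finset.mem_filter, Finset.mem_univ, true_and, dif_pos hA]
          simpa using Classical.choose_spec hA
        · intro j _ j' _ h
          exact congrArg Prod.snd h
      have hRowCard :
          (Finset.univ.filter (fun i : Fin n1 => ∃ l, Pᴴ l i ≠ 0)).card ≤ min n1 n2 := by
        rw [← hcard k₀]
        apply Finset.card_le_card_of_injOn
          (fun i => (i, if h : ∃ l, A k₀ i l ≠ 0 then Classical.choose h else ⟨0, hn2⟩))
        · intro i hi
          simp only [Finset.mem_coe, Finset.mem_filter, Finset.mem_univ, true_and] at hi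
          obtain ⟨l, hl⟩ := hi
          rw [Matrix.conjTranspose_apply, star_ne_zero] at hl
          have hA : ∃ l, A k₀ i l ≠ 0 := ⟨l, (hPsupp i l).mp hl⟩
          simp only [Finset.mem_coe, hΩ, Finset.mem_filter, Finset.mem_univ, true_and, dif_pos hA]
          simpa using Classical.choose_spec hA
        · intro i _ i' _ h
          exact congrArg Prod.fst h
      have hQcolU : ∀ l, ∑ i, ‖(U * Uᴴ) i l‖ ^ 2 ≤ μ * r / n1 := fun l => by
        rw [wb_aux_col U hU l]; exact hUinc l
      have hQcolV : ∀ l, ∑ i, ‖(V * Vᴴ) i l‖ ^ 2 ≤ μ * r / n2 := fun l => by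
        rw [wb_aux_col V hV l]; exact hVinc l
      have hX : wbF2 (U * Uᴴ * P) ≤ μ * r := by
        refine le_trans (wbF2_mul_le (U * Uᴴ) P (μ * r / n1) (min n1 n2) hμrn1
          hcolP hPval hColCard hQcolU) ?_
        calc ((min n1 n2 : ℕ) : ℝ) * (μ * r / n1) ≤ (n1 : ℝ) * (μ * r / n1) :=
            mul_le_mul_of_nonneg_right hsRn1 hμrn1
          _ = μ * r := by field_simp
      have hY : wbF2 (P * (V * Vᴴ)) ≤ μ * r := by
        rw [← wbF2_conjTranspose]
        have he : (P * (V * Vᴴ))ᴴ = (V * Vᴴ) * Pᴴ := by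
          rw [Matrix.conjTranspose_mul, Matrix.conjTranspose_mul,
            Matrix.conjTranspose_conjTranspose]
        rw [he]
        refine le_trans (wbF2_mul_le (V * Vᴴ) Pᴴ (μ * r / n2) (min n1 n2) hμrn2
          hrowPH hPHval hRowCard hQcolV) ?_
        calc ((min n1 n2 : ℕ) : ℝ) * (μ * r / n2) ≤ (n2 : ℝ) * (μ * r / n2) :=
            mul_le_mul_of_nonneg_right hsRn2 hμrn2
          _ = μ * r := by field_simp
      have hZ : wbF2 (U * Uᴴ * P * (V * Vᴴ)) ≤ μ * r :=
        le_trans (wbF2_projR V hV (U * Uᴴ * P)) hX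
      have hPT : wbF2 (PT U V P) ≤ 9 * μ * r := by
        unfold PT
        refine le_trans (wbF2_three _ _ _) ?_
        linarith
      refine le_trans (hKEY (PT U V P)) ?_
      gcongr
end

section
/- Let A_1,…,A_n ∈ ℂ^{n1×n2} satisfy: (i) every nonzero entry of A_k equals ‖A_k‖₀^{−1/2}, where ‖A_k‖₀ is the number of nonzero entries of A_k; (ii) each row and each column of each A_k has at most one nonzero entry; (iii) the supports of distinct A_k are pairwise disjoint and their union is all of {1,…,n1}×{1,…,n2}; (iv) ‖A_k‖₀ = min(n1,n2) for every k. Then for every M ∈ ℂ^{n1×n2}, ∑_{k=1}^n |⟨A_k, M⟩|²·‖A_k‖² ≤ max( max_{1≤i≤n1} ‖e_iᴴ M‖₂², max_{1≤j≤n2} ‖M e_j‖₂² ), where ‖A_k‖ is the spectral norm of A_k. -/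
open Matrix

lemma nnz_eq_card {n1 n2 : ℕ} (B : Matrix (Fin n1) (Fin n2) ℂ) :
    nnz B = (Finset.univ.filter (fun ij : Fin n1 × Fin n2 => B ij.1 ij.2 ≠ 0)).card := by
  rw [nnz, show {ij : Fin n1 × Fin n2 | B ij.1 ij.2 ≠ 0}
      = ↑(Finset.univ.filter (fun ij : Fin n1 × Fin n2 => B ij.1 ij.2 ≠ 0)) by
    ext ij; simp]
  exact Set.ncard_coe_finset _

lemma specNorm_le_of_subperm {n1 n2 : ℕ} (B : Matrix (Fin n1) (Fin n2) ℂ) (c : ℝ) (hc : 0 ≤ c)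
    (hval : ∀ i j, ‖B i j‖ ≤ c)
    (hrow : ∀ i j j', B i j ≠ 0 → B i j' ≠ 0 → j = j')
    (hcol : ∀ i i' j, B i j ≠ 0 → B i' j ≠ 0 → i = i') :
    specNorm B ≤ c := by
  apply ContinuousLinearMap.opNorm_le_bound _ hc
  intro x
  have hL : ∀ i, (LinearMap.toContinuousLinearMap (Matrix.toEuclideanLin B)) x i
      = ∑ j, B i j * x j := by
    intro i
    rfl
  have key : ‖(LinearMap.toContinuousLinearMap (Matrix.toEuclideanLin B)) x‖ ^ 2
      ≤ (c * ‖x‖) ^ 2 := by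
    rw [EuclideanSpace.norm_eq, Real.sq_sqrt (by positivity)]
    have step1 : ∀ i, ‖(LinearMap.toContinuousLinearMap (Matrix.toEuclideanLin B)) x i‖ ^ 2
        ≤ c ^ 2 * ∑ j, (if B i j ≠ 0 then ‖x j‖ ^ 2 else 0) := by
      intro i
      rw [hL]
      by_cases h : ∃ j, B i j ≠ 0
      · obtain ⟨j0, hj0⟩ := h
        rw [Finset.sum_eq_single j0 (fun j _ hj => by
          by_cases hz : B i j = 0
          · simp [hz]
          · exact absurd (hrow i j j0 hz hj0) hj) (by simp)]
        have h1 : ‖B i j0 * x j0‖ ^ 2 ≤ c ^ 2 * ‖x j0‖ ^ 2 := by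
          rw [norm_mul, mul_pow]
          gcongr
          exact hval i j0
        refine h1.trans ?_
        gcongr
        refine Finset.single_le_sum (f := fun j => if B i j ≠ 0 then ‖x j‖ ^ 2 else 0)
          (fun j _ => by positivity) (Finset.mem_univ j0) |>.trans_eq' ?_
        simp [hj0]
      · push_neg at h
        simp [h]
    calc ∑ i, ‖(LinearMap.toContinuousLinearMap (Matrix.toEuclideanLin B)) x i‖ ^ 2
        ≤ ∑ i, c ^ 2 * ∑ j, (if B i j ≠ 0 then ‖x j‖ ^ 2 else 0) :=
          Finset.sum_le_sum fun i _ => step1 i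
      _ = c ^ 2 * ∑ j, ∑ i, (if B i j ≠ 0 then ‖x j‖ ^ 2 else 0) := by
          rw [← Finset.mul_sum, Finset.sum_comm]
      _ ≤ c ^ 2 * ∑ j, ‖x j‖ ^ 2 := by
          gcongr with j _
          by_cases h : ∃ i, B i j ≠ 0
          · obtain ⟨i0, hi0⟩ := h
            rw [Finset.sum_eq_single i0 (fun i _ hi => by
              by_cases hz : B i j = 0
              · simp [hz]
              · exact absurd (hcol i i0 j hz hi0) hi) (by simp)]
            simp [hi0]
          · push_neg at h
            simp [h]
      _ = (c * ‖x‖) ^ 2 := by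
          rw [mul_pow, EuclideanSpace.norm_eq, Real.sq_sqrt (by positivity)]
  exact (pow_le_pow_iff_left₀ (norm_nonneg _) (by positivity) two_ne_zero).mp key

/-- For a basis family with the wrap-around property, for all `M`,
`∑_k |⟨A_k, M⟩|²·‖A_k‖² ≤ max(max_i ‖e_iᴴM‖₂², max_j ‖Me_j‖₂²)`. -/
theorem wraparound_basis_A2_norm_bound
    (n1 n2 n : ℕ)
    (A : Fin n → Matrix (Fin n1) (Fin n2) ℂ)
    (hval : ∀ k i j, A k i j ≠ 0 → A k i j = (((Real.sqrt (nnz (A k)))⁻¹ : ℝ) : ℂ))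
    (hrow : ∀ k i j j', A k i j ≠ 0 → A k i j' ≠ 0 → j = j')
    (hcol : ∀ k i i' j, A k i j ≠ 0 → A k i' j ≠ 0 → i = i')
    (hdisj : ∀ k k' i j, A k i j ≠ 0 → A k' i j ≠ 0 → k = k')
    (hcover : ∀ i j, ∃ k, A k i j ≠ 0)
    (hwrap : ∀ k, nnz (A k) = min n1 n2) :
    ∀ M : Matrix (Fin n1) (Fin n2) ℂ,
      ∑ k, ‖frobInner (A k) M‖ ^ 2 * specNorm (A k) ^ 2 ≤
        max (⨆ i, ∑ j, ‖M i j‖ ^ 2) (⨆ j, ∑ i, ‖M i j‖ ^ 2) := by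
  intro M
  have hR1 : 0 ≤ ⨆ i, ∑ j, ‖M i j‖ ^ 2 :=
    Real.iSup_nonneg fun i => Finset.sum_nonneg fun j _ => by positivity
  have hR2 : 0 ≤ ⨆ j, ∑ i, ‖M i j‖ ^ 2 :=
    Real.iSup_nonneg fun j => Finset.sum_nonneg fun i _ => by positivity
  set s : ℕ := min n1 n2 with hsdef
  rcases Nat.eq_zero_or_pos s with hs0 | hspos
  · -- degenerate: n1 = 0 or n2 = 0
    have h12 : n1 = 0 ∨ n2 = 0 := by omega
    have hz : ∀ k, frobInner (A k) M = 0 := by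
      intro k
      rcases h12 with h | h
      · subst h
        simp [frobInner, Matrix.trace, Matrix.mul_apply]
      · subst h
        simp [frobInner, Matrix.trace]
    simp only [hz, norm_zero]
    simp only [ne_eq, OfNat.ofNat_ne_zero, not_false_eq_true, zero_pow, zero_mul,
      Finset.sum_const_zero]
    exact le_max_of_le_left hR1
  -- main case
  have hn1 : 0 < n1 := by omega
  have hn2 : 0 < n2 := by omega
  set c : ℝ := (Real.sqrt s)⁻¹ with hcdef
  have hc : 0 ≤ c := by positivity
  have hc2 : c ^ 2 = (s : ℝ)⁻¹ := by
    rw [hcdef, inv_pow, Real.sq_sqrt (by positivity)]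
  have hAval : ∀ k i j, A k i j ≠ 0 → A k i j = (c : ℂ) := by
    intro k i j h
    rw [hval k i j h, hwrap k]
  have hAnorm : ∀ k i j, ‖A k i j‖ ≤ c := by
    intro k i j
    by_cases h : A k i j = 0
    · simp [h, hc]
    · rw [hAval k i j h, Complex.norm_real, Real.norm_eq_abs, abs_of_nonneg hc]
  have hspec : ∀ k, specNorm (A k) ^ 2 ≤ c ^ 2 := by
    intro k
    have := specNorm_le_of_subperm (A k) c hc (hAnorm k) (hrow k) (hcol k)
    have h0 : 0 ≤ specNorm (A k) := norm_nonneg _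
    nlinarith
  -- support finsets
  set S : Fin n → Finset (Fin n1 × Fin n2) :=
    fun k => Finset.univ.filter (fun ij => A k ij.1 ij.2 ≠ 0) with hSdef
  have hScard : ∀ k, (S k).card = s := fun k => by
    rw [hSdef]; rw [← nnz_eq_card, hwrap k]
  -- frobInner bound
  have hfrob : ∀ k, ‖frobInner (A k) M‖ ^ 2 ≤ ∑ ij ∈ S k, ‖M ij.1 ij.2‖ ^ 2 := by
    intro k
    have hexp : frobInner (A k) M
        = ∑ ij ∈ S k, star (A k ij.1 ij.2) * M ij.1 ij.2 := by
      rw [frobInner, Matrix.trace]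
      simp only [Matrix.diag_apply, Matrix.mul_apply, Matrix.conjTranspose_apply]
      rw [Finset.sum_comm]
      rw [← Finset.sum_product' (f := fun i j => star (A k i j) * M i j),
        Finset.univ_product_univ]
      symm
      apply Finset.sum_subset (Finset.subset_univ _)
      intro ij _ hij
      simp only [hSdef, Finset.mem_filter, Finset.mem_univ, true_and, not_not] at hij
      simp [hij]
    have h1 : ‖frobInner (A k) M‖ ≤ c * ∑ ij ∈ S k, ‖M ij.1 ij.2‖ := by
      rw [hexp, Finset.mul_sum]
      refine (norm_sum_le _ _).trans (Finset.sum_le_sum fun ij hij => ?_)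
      rw [norm_mul, norm_star]
      exact mul_le_mul_of_nonneg_right (hAnorm k ij.1 ij.2) (norm_nonneg _)
    have h2 : ‖frobInner (A k) M‖ ^ 2 ≤ c ^ 2 * (∑ ij ∈ S k, ‖M ij.1 ij.2‖) ^ 2 := by
      rw [← mul_pow]
      exact pow_le_pow_left₀ (norm_nonneg _) h1 2
    refine h2.trans ?_
    have h3 : (∑ ij ∈ S k, ‖M ij.1 ij.2‖) ^ 2 ≤ (S k).card * ∑ ij ∈ S k, ‖M ij.1 ij.2‖ ^ 2 :=
      sq_sum_le_card_mul_sum_sq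
    rw [hScard k] at h3
    calc c ^ 2 * (∑ ij ∈ S k, ‖M ij.1 ij.2‖) ^ 2
        ≤ c ^ 2 * ((s : ℝ) * ∑ ij ∈ S k, ‖M ij.1 ij.2‖ ^ 2) :=
          mul_le_mul_of_nonneg_left h3 (sq_nonneg c)
      _ = (c ^ 2 * s) * ∑ ij ∈ S k, ‖M ij.1 ij.2‖ ^ 2 := by ring
      _ = ∑ ij ∈ S k, ‖M ij.1 ij.2‖ ^ 2 := by
          rw [hc2, inv_mul_cancel₀ (by positivity), one_mul]
  -- partition
  have hpart : ∑ k, ∑ ij ∈ S k, ‖M ij.1 ij.2‖ ^ 2 = ∑ ij : Fin n1 × Fin n2, ‖M ij.1 ij.2‖ ^ 2 := by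
    rw [← Finset.sum_biUnion]
    · congr 1
      apply Finset.eq_univ_iff_forall.mpr
      intro ij
      rw [Finset.mem_biUnion]
      obtain ⟨k, hk⟩ := hcover ij.1 ij.2
      exact ⟨k, Finset.mem_univ k, by simp [hSdef, hk]⟩
    · intro k _ k' _ hkk'
      refine Finset.disjoint_left.mpr ?_
      intro ij h1 h2
      simp only [hSdef, Finset.mem_filter, Finset.mem_univ, true_and] at h1 h2
      exact hkk' (hdisj k k' ij.1 ij.2 h1 h2)
  -- assemble
  have hLHS : ∑ k, ‖frobInner (A k) M‖ ^ 2 * specNorm (A k) ^ 2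
      ≤ (s : ℝ)⁻¹ * ∑ ij : Fin n1 × Fin n2, ‖M ij.1 ij.2‖ ^ 2 := by
    calc ∑ k, ‖frobInner (A k) M‖ ^ 2 * specNorm (A k) ^ 2
        ≤ ∑ k, (∑ ij ∈ S k, ‖M ij.1 ij.2‖ ^ 2) * c ^ 2 := by
          refine Finset.sum_le_sum fun k _ => ?_
          have := mul_le_mul (hfrob k) (hspec k) (sq_nonneg _)
            (Finset.sum_nonneg fun ij _ => by positivity)
          exact this
      _ = c ^ 2 * ∑ k, ∑ ij ∈ S k, ‖M ij.1 ij.2‖ ^ 2 := by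
          rw [Finset.mul_sum]; exact Finset.sum_congr rfl fun k _ => mul_comm _ _
      _ = (s : ℝ)⁻¹ * ∑ ij : Fin n1 × Fin n2, ‖M ij.1 ij.2‖ ^ 2 := by rw [hc2, hpart]
  refine hLHS.trans ?_
  rcases le_total n1 n2 with hle | hle
  · have hs1 : s = n1 := by omega
    have hsum : ∑ ij : Fin n1 × Fin n2, ‖M ij.1 ij.2‖ ^ 2 = ∑ i, ∑ j, ‖M i j‖ ^ 2 := by
      rw [← Finset.univ_product_univ, Finset.sum_product]
    refine le_max_of_le_left ?_
    rw [hsum, hs1]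
    have hbdd : ∀ i, ∑ j, ‖M i j‖ ^ 2 ≤ ⨆ i, ∑ j, ‖M i j‖ ^ 2 := by
      haveI : Nonempty (Fin n1) := ⟨⟨0, hn1⟩⟩
      intro i
      exact le_ciSup (f := fun i => ∑ j, ‖M i j‖ ^ 2)
        (Set.Finite.bddAbove (Set.finite_range _)) i
    calc (n1 : ℝ)⁻¹ * ∑ i, ∑ j, ‖M i j‖ ^ 2
        ≤ (n1 : ℝ)⁻¹ * ∑ _i : Fin n1, ⨆ i, ∑ j, ‖M i j‖ ^ 2 :=
          mul_le_mul_of_nonneg_left (Finset.sum_le_sum fun i _ => hbdd i) (by positivity)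
      _ = (n1 : ℝ)⁻¹ * (n1 * ⨆ i, ∑ j, ‖M i j‖ ^ 2) := by
          rw [Finset.sum_const, Finset.card_univ, Fintype.card_fin, nsmul_eq_mul]
      _ = ⨆ i, ∑ j, ‖M i j‖ ^ 2 := by
          rw [← mul_assoc, inv_mul_cancel₀ (by positivity), one_mul]
  · have hs1 : s = n2 := by omega
    have hsum : ∑ ij : Fin n1 × Fin n2, ‖M ij.1 ij.2‖ ^ 2 = ∑ j, ∑ i, ‖M i j‖ ^ 2 := by
      rw [← Finset.univ_product_univ, Finset.sum_product]
      exact Finset.sum_comm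
    refine le_max_of_le_right ?_
    rw [hsum, hs1]
    have hbdd : ∀ j, ∑ i, ‖M i j‖ ^ 2 ≤ ⨆ j, ∑ i, ‖M i j‖ ^ 2 := by
      haveI : Nonempty (Fin n2) := ⟨⟨0, hn2⟩⟩
      intro j
      exact le_ciSup (f := fun j => ∑ i, ‖M i j‖ ^ 2)
        (Set.Finite.bddAbove (Set.finite_range _)) j
    calc (n2 : ℝ)⁻¹ * ∑ j, ∑ i, ‖M i j‖ ^ 2
        ≤ (n2 : ℝ)⁻¹ * ∑ _j : Fin n2, ⨆ j, ∑ i, ‖M i j‖ ^ 2 :=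
          mul_le_mul_of_nonneg_left (Finset.sum_le_sum fun j _ => hbdd j) (by positivity)
      _ = (n2 : ℝ)⁻¹ * (n2 * ⨆ j, ∑ i, ‖M i j‖ ^ 2) := by
          rw [Finset.sum_const, Finset.card_univ, Fintype.card_fin, nsmul_eq_mul]
      _ = ⨆ j, ∑ i, ‖M i j‖ ^ 2 := by
          rw [← mul_assoc, inv_mul_cancel₀ (by positivity), one_mul]
end
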